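/- arXiv:1809.01222 — 7 statements merged into one kernel-verified Lean document; each statement's English description precedes it below -/
import Mathlib

section
/- For every t > 0, z₀ ∈ ℝ, and g ∈ L²(ℝ), the double integral ∬_{Ω₊} |g(u)| e^{8t(u−z₀)v} dA(u,v), where Ω₊ = {u + iv : u < z₀, 0 < v < z₀ − u}, is at most K ‖g‖_{L²(ℝ)} t^{−3/4}, with K = (∫_{−∞}^0 [(1 − e^{−8w²})/(8w)]² dw)^{1/2}. -/
open MeasureTheory Set

noncomputable def phi (w : ℝ) : ℝ := ((1 - Real.exp (-8 * w ^ 2)) / (8 * w)) ^ 2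

lemma phi_nonneg (w : ℝ) : 0 ≤ phi w := sq_nonneg _

lemma phi_meas : Measurable phi := by unfold phi; fun_prop

lemma one_sub_exp_le {x : ℝ} : 1 - Real.exp (-x) ≤ x := by
  have := Real.add_one_le_exp (-x); linarith

lemma one_sub_exp_nonneg {x : ℝ} (hx : 0 ≤ x) : 0 ≤ 1 - Real.exp (-x) := by
  have : Real.exp (-x) ≤ Real.exp 0 := Real.exp_le_exp.2 (by linarith)
  simpa [Real.exp_zero] using this

lemma num_nonneg (w : ℝ) : 0 ≤ 1 - Real.exp (-8 * w ^ 2) := by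
  rw [neg_mul]; exact one_sub_exp_nonneg (by positivity)

lemma num_le (w : ℝ) : 1 - Real.exp (-8 * w ^ 2) ≤ 8 * w ^ 2 := by
  rw [neg_mul]; exact one_sub_exp_le

lemma num_le_one (w : ℝ) : 1 - Real.exp (-8 * w ^ 2) ≤ 1 := by
  have := Real.exp_nonneg (-8 * w ^ 2); linarith

lemma phi_le_sq {w : ℝ} : phi w ≤ w ^ 2 := by
  rcases eq_or_ne w 0 with rfl | hw
  · simp [phi]
  · have habs : |(1 - Real.exp (-8 * w ^ 2)) / (8 * w)| ≤ |w| := by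
      rw [abs_div, abs_of_nonneg (num_nonneg w), div_le_iff₀ (by positivity)]
      calc 1 - Real.exp (-8 * w ^ 2) ≤ 8 * w ^ 2 := num_le w
        _ = |w| * |8 * w| := by
            rw [← abs_mul, abs_of_nonneg (by nlinarith [sq_nonneg w] : (0:ℝ) ≤ w * (8 * w))]; ring
    calc phi w = |(1 - Real.exp (-8 * w ^ 2)) / (8 * w)| ^ 2 := (sq_abs _).symm
      _ ≤ |w| ^ 2 := pow_le_pow_left₀ (abs_nonneg _) habs 2
      _ = w ^ 2 := sq_abs w

lemma phi_le_inv {w : ℝ} (hw : w ≠ 0) : phi w ≤ 64⁻¹ * (w ^ 2)⁻¹ := by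
  have habs : |(1 - Real.exp (-8 * w ^ 2)) / (8 * w)| ≤ |(8 * w)⁻¹| := by
    rw [abs_div, abs_inv, div_le_iff₀ (by positivity : (0:ℝ) < |8 * w|)]
    rw [abs_of_nonneg (num_nonneg w), inv_mul_cancel₀ (by positivity)]
    exact num_le_one w
  calc phi w = |(1 - Real.exp (-8 * w ^ 2)) / (8 * w)| ^ 2 := (sq_abs _).symm
    _ ≤ |(8 * w)⁻¹| ^ 2 := pow_le_pow_left₀ (abs_nonneg _) habs 2
    _ = 64⁻¹ * (w ^ 2)⁻¹ := by rw [sq_abs]; field_simp; ring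

lemma phi_int_Ioi : IntegrableOn phi (Set.Ioi (0:ℝ)) := by
  have h1 : IntegrableOn phi (Set.Ioc (0:ℝ) 1) := by
    apply Measure.integrableOn_of_bounded (M := 1) (by simp)
      (phi_meas.aestronglyMeasurable)
    filter_upwards [ae_restrict_mem measurableSet_Ioc] with w hw
    have : phi w ≤ w ^ 2 := phi_le_sq
    have hw2 : w ^ 2 ≤ 1 := by nlinarith [hw.1, hw.2]
    rw [Real.norm_eq_abs, abs_of_nonneg (phi_nonneg w)]; linarith
  have h2 : IntegrableOn phi (Set.Ioi (1:ℝ)) := by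
    have hint : IntegrableOn (fun w : ℝ => 64⁻¹ * (w ^ 2)⁻¹) (Set.Ioi (1:ℝ)) := by
      apply Integrable.const_mul
      have h := integrableOn_Ioi_rpow_of_lt (show (-2:ℝ) < -1 by norm_num) (one_pos)
      apply h.congr_fun ?_ measurableSet_Ioi
      intro x hx
      show x ^ (-2 : ℝ) = (x ^ 2)⁻¹
      rw [Real.rpow_neg (by linarith [mem_Ioi.1 hx]), Real.rpow_two]
    apply hint.mono' phi_meas.aestronglyMeasurable
    filter_upwards [ae_restrict_mem measurableSet_Ioi] with w hw
    rw [Real.norm_eq_abs, abs_of_nonneg (phi_nonneg w)]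
    exact phi_le_inv (by linarith [mem_Ioi.1 hw])
  have h3 : IntegrableOn phi (Set.Ioc (0:ℝ) 1 ∪ Set.Ioi 1) := h1.union h2
  apply h3.mono_set
  intro x hx
  rcases le_or_gt x 1 with h | h
  · exact Or.inl ⟨hx, h⟩
  · exact Or.inr h

lemma phi_even (w : ℝ) : phi (-w) = phi w := by
  unfold phi
  rw [neg_pow, div_pow, div_pow]
  congr 1
  · ring_nf
  · ring

lemma phi_int_Iio : IntegrableOn phi (Set.Iio (0:ℝ)) := by
  rw [← (Measure.measurePreserving_neg (volume : Measure ℝ)).integrableOn_comp_preimage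
      (Homeomorph.neg ℝ).measurableEmbedding]
  simp only [Function.comp_def, neg_preimage, neg_Iio, neg_zero]
  exact phi_int_Ioi.congr_fun (fun x _ => (phi_even x).symm) measurableSet_Ioi


lemma inner_eval {t : ℝ} (ht : 0 < t) {z₀ u : ℝ} (hu : u < z₀) :
    ∫⁻ v in Set.Ioo 0 (z₀ - u), ENNReal.ofReal (Real.exp (8 * t * (u - z₀) * v)) =
      ENNReal.ofReal ((1 - Real.exp (-(8 * t * (z₀ - u) ^ 2))) / (8 * t * (z₀ - u))) := by
  have hb0 : 0 < z₀ - u := by linarith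
  have hk0 : 8 * t * (u - z₀) < 0 := by nlinarith
  have hint : IntegrableOn (fun v => Real.exp (8 * t * (u - z₀) * v)) (Set.Ioo 0 (z₀ - u)) := by
    exact ((Real.continuous_exp.comp (continuous_const.mul continuous_id)).integrableOn_Icc).mono_set
      Ioo_subset_Icc_self
  rw [← ofReal_integral_eq_lintegral_ofReal hint (ae_of_all _ fun v => (Real.exp_pos _).le)]
  congr 1
  rw [← integral_Ioc_eq_integral_Ioo, ← intervalIntegral.integral_of_le hb0.le]
  rw [intervalIntegral.integral_comp_mul_left (fun x => Real.exp x) (ne_of_lt hk0)]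
  rw [mul_zero, integral_exp, smul_eq_mul, Real.exp_zero]
  have h1 : 8 * t * (u - z₀) * (z₀ - u) = -(8 * t * (z₀ - u) ^ 2) := by ring
  rw [h1]
  have h2 : 8 * t * (u - z₀) = -(8 * t * (z₀ - u)) := by ring
  rw [h2]
  generalize Real.exp (-(8 * t * (z₀ - u) ^ 2)) = E
  have h3 : 8 * t * (z₀ - u) ≠ 0 := by positivity
  field_simp
  ring


lemma subst_lemma {s : ℝ} (hs : 0 < s) (z₀ : ℝ) (q : ℝ → ENNReal) (hq : Measurable q) :
    ∫⁻ u in Set.Iio z₀, q (s * (u - z₀)) =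
      ENNReal.ofReal s⁻¹ * ∫⁻ w in Set.Iio 0, q w := by
  have hψ : Measurable fun u : ℝ => s * (u - z₀) := by fun_prop
  have hmap : Measure.map (fun u : ℝ => s * (u - z₀)) volume
      = ENNReal.ofReal s⁻¹ • (volume : Measure ℝ) := by
    have h1 : (fun u : ℝ => s * (u - z₀)) = (fun x : ℝ => s * x) ∘ (fun u : ℝ => u + (-z₀)) := by
      funext u; simp [sub_eq_add_neg]
    rw [h1, ← Measure.map_map (by fun_prop) (by fun_prop),
      map_add_right_eq_self (volume : Measure ℝ) (-z₀),
      Real.map_volume_mul_left hs.ne', abs_of_pos (inv_pos.2 hs)]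
  have hkey : ∀ u : ℝ, (Set.Iio z₀).indicator (fun u => q (s * (u - z₀))) u
      = (Set.Iio 0).indicator q (s * (u - z₀)) := by
    intro u
    by_cases hu : u < z₀
    · rw [indicator_of_mem (mem_Iio.2 hu), indicator_of_mem (mem_Iio.2 (by nlinarith))]
    · rw [indicator_of_notMem (by simpa using hu), indicator_of_notMem (by simp only [mem_Iio, not_lt]; nlinarith [not_lt.1 hu])]
  calc ∫⁻ u in Set.Iio z₀, q (s * (u - z₀))
      = ∫⁻ u, (Set.Iio z₀).indicator (fun u => q (s * (u - z₀))) u := by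
        rw [lintegral_indicator measurableSet_Iio]
    _ = ∫⁻ u, (Set.Iio 0).indicator q (s * (u - z₀)) := by
        simp_rw [hkey]
    _ = ∫⁻ w, (Set.Iio 0).indicator q w ∂(Measure.map (fun u : ℝ => s * (u - z₀)) volume) := by
        rw [lintegral_map (hq.indicator measurableSet_Iio) hψ]
    _ = ENNReal.ofReal s⁻¹ * ∫⁻ w in Set.Iio 0, q w := by
        rw [hmap, lintegral_smul_measure, lintegral_indicator measurableSet_Iio, smul_eq_mul]

lemma h_sq_eq {t z₀ u : ℝ} (ht : 0 < t) (hu : u < z₀) :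
    ((1 - Real.exp (-(8 * t * (z₀ - u) ^ 2))) / (8 * t * (z₀ - u))) ^ 2
      = t⁻¹ * phi (Real.sqrt t * (u - z₀)) := by
  have hst : Real.sqrt t ^ 2 = t := Real.sq_sqrt ht.le
  have hs : 0 < Real.sqrt t := Real.sqrt_pos.2 ht
  unfold phi
  have harg : -8 * (Real.sqrt t * (u - z₀)) ^ 2 = -(8 * t * (z₀ - u) ^ 2) := by
    rw [mul_pow, hst]; ring
  rw [harg]
  generalize (1 - Real.exp (-(8 * t * (z₀ - u) ^ 2))) = E
  have hzu : z₀ - u ≠ 0 := fun h => hu.ne (by linarith [sub_eq_zero.1 h])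
  rw [div_pow, div_pow]
  have hden : (8 * (Real.sqrt t * (u - z₀))) ^ 2 = 64 * (t * (u - z₀) ^ 2) := by
    rw [mul_pow, mul_pow, hst]; ring
  rw [hden]
  have hd : (8 * t * (z₀ - u)) ^ 2 = t * (64 * (t * (u - z₀) ^ 2)) := by ring
  rw [hd, ← div_div, inv_mul_eq_div, div_right_comm]


/-- For `t > 0`, `z₀ ∈ ℝ`, `g ∈ L²(ℝ)`, the double integral of `|g(u)| e^{8t(u−z₀)v}` over
the sector `Ω₊ = {(u,v) : u < z₀, 0 < v < z₀ − u}` is at most `K ‖g‖_{L²} t^{−3/4}`,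
where `K = (∫_{−∞}^0 [(1 − e^{−8w²})/(8w)]² dw)^{1/2}`. -/
theorem I_plus_estimate (t z₀ : ℝ) (ht : 0 < t) (g : ℝ → ℂ)
    (hg : MemLp g 2 (volume : Measure ℝ)) :
    (∫ p in {p : ℝ × ℝ | p.1 < z₀ ∧ 0 < p.2 ∧ p.2 < z₀ - p.1},
        ‖g p.1‖ * Real.exp (8 * t * (p.1 - z₀) * p.2) ∂(volume : Measure (ℝ × ℝ))) ≤
      Real.sqrt (∫ w in Set.Iio (0 : ℝ), ((1 - Real.exp (-8 * w ^ 2)) / (8 * w)) ^ 2) *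
        (eLpNorm g 2 (volume : Measure ℝ)).toReal * t ^ (-(3 : ℝ) / 4) := by
  obtain ⟨g', hg'sm, hgg'⟩ := hg.1
  have hg'm : Measurable g' := hg'sm.measurable
  set S : Set (ℝ × ℝ) := {p : ℝ × ℝ | p.1 < z₀ ∧ 0 < p.2 ∧ p.2 < z₀ - p.1} with hS_def
  have hS : MeasurableSet S := by
    apply MeasurableSet.inter
    · exact measurableSet_lt measurable_fst measurable_const
    apply MeasurableSet.inter
    · exact measurableSet_lt measurable_const measurable_snd
    · exact measurableSet_lt measurable_snd (measurable_const.sub measurable_fst)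
  -- constants
  set K₀ : ℝ := ∫ w in Set.Iio (0 : ℝ), ((1 - Real.exp (-8 * w ^ 2)) / (8 * w)) ^ 2 with hK₀_def
  have hK₀_phi : K₀ = ∫ w in Set.Iio (0:ℝ), phi w := rfl
  have hK₀_nonneg : 0 ≤ K₀ := by
    rw [hK₀_phi]; exact setIntegral_nonneg measurableSet_Iio fun w _ => phi_nonneg w
  -- replace g by g'
  have hfst : Measure.QuasiMeasurePreserving (Prod.fst : ℝ × ℝ → ℝ)
      ((volume : Measure ℝ).prod (volume : Measure ℝ)) volume :=
    Measure.quasiMeasurePreserving_fst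
  have haeg : (fun p : ℝ × ℝ => g p.1) =ᵐ[(volume : Measure ℝ).prod volume]
      (fun p : ℝ × ℝ => g' p.1) := hfst.ae_eq hgg'
  have hvol : (volume : Measure (ℝ × ℝ)) = (volume : Measure ℝ).prod volume :=
    Measure.volume_eq_prod ℝ ℝ
  have hLHS : (∫ p in S, ‖g p.1‖ * Real.exp (8 * t * (p.1 - z₀) * p.2)
        ∂(volume : Measure (ℝ × ℝ)))
      = ∫ p in S, ‖g' p.1‖ * Real.exp (8 * t * (p.1 - z₀) * p.2)
        ∂(volume : Measure (ℝ × ℝ)) := by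
    apply integral_congr_ae
    have := ae_restrict_of_ae (μ := (volume : Measure (ℝ × ℝ))) (s := S)
      (by rw [hvol]; exact haeg)
    filter_upwards [this] with p hp
    rw [hp]
  rw [hLHS, eLpNorm_congr_ae hgg']
  -- to lintegral
  have hFm : Measurable fun p : ℝ × ℝ => ‖g' p.1‖ * Real.exp (8 * t * (p.1 - z₀) * p.2) := by
    apply Measurable.mul
    · exact hg'm.norm.comp measurable_fst
    · fun_prop
  rw [integral_eq_lintegral_of_nonneg_ae
      (ae_of_all _ fun p => by positivity) (hFm.aestronglyMeasurable.restrict)]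
  set F : ℝ × ℝ → ENNReal :=
    fun p => ENNReal.ofReal (‖g' p.1‖ * Real.exp (8 * t * (p.1 - z₀) * p.2)) with hF_def
  have hFm' : Measurable F := by
    apply Measurable.ennreal_ofReal hFm
  -- RHS nonneg
  have hrpow_pos : (0:ℝ) < t ^ (-(3:ℝ)/4) := Real.rpow_pos_of_pos ht _
  have hRHS_nonneg : 0 ≤ Real.sqrt K₀ * (eLpNorm g' 2 volume).toReal * t ^ (-(3:ℝ)/4) := by
    positivity
  -- Step: compute the lintegral bound
  set h : ℝ → ℝ := fun u => (1 - Real.exp (-(8 * t * (z₀ - u) ^ 2))) / (8 * t * (z₀ - u))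
    with hh_def
  have hhm : Measurable h := by unfold h; fun_prop
  have key : (∫⁻ p in S, F p ∂(volume : Measure (ℝ × ℝ)))
      ≤ eLpNorm g' 2 volume * ENNReal.ofReal (Real.sqrt K₀ * t ^ (-(3:ℝ)/4)) := by
    have step1 : (∫⁻ p in S, F p ∂(volume : Measure (ℝ × ℝ)))
        = ∫⁻ u in Set.Iio z₀, ENNReal.ofReal ‖g' u‖ * ENNReal.ofReal (h u) := by
      rw [← lintegral_indicator hS, hvol,
        lintegral_prod _ ((hFm'.indicator hS).aemeasurable)]
      have hrow : ∀ u : ℝ, (∫⁻ v, S.indicator F (u, v))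
          = ENNReal.ofReal ‖g' u‖
            * ∫⁻ v in Set.Ioo 0 (z₀ - u), ENNReal.ofReal (Real.exp (8 * t * (u - z₀) * v)) := by
        intro u
        have hind : (fun v => S.indicator F (u, v))
            = (Set.Ioo 0 (z₀ - u)).indicator (fun v => F (u, v)) := by
          funext v
          by_cases hv : v ∈ Set.Ioo 0 (z₀ - u)
          · rw [indicator_of_mem hv,
              indicator_of_mem (show (u, v) ∈ S from ⟨by have := hv.1; have := hv.2; dsimp; linarith, hv.1, hv.2⟩)]
          · rw [indicator_of_notMem hv, indicator_of_notMem (fun hc => hv ⟨hc.2.1, hc.2.2⟩)]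
        rw [hind, lintegral_indicator measurableSet_Ioo]
        have : ∀ v, F (u, v)
            = ENNReal.ofReal ‖g' u‖ * ENNReal.ofReal (Real.exp (8 * t * (u - z₀) * v)) := by
          intro v; simp only [hF_def]; exact ENNReal.ofReal_mul (norm_nonneg _)
        simp_rw [this]
        rw [lintegral_const_mul' _ _ ENNReal.ofReal_ne_top]
      simp_rw [hrow]
      have houter : (fun u => ENNReal.ofReal ‖g' u‖
            * ∫⁻ v in Set.Ioo 0 (z₀ - u), ENNReal.ofReal (Real.exp (8 * t * (u - z₀) * v)))
          = (Set.Iio z₀).indicator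
              (fun u => ENNReal.ofReal ‖g' u‖ * ENNReal.ofReal (h u)) := by
        funext u
        by_cases hu : u < z₀
        · rw [indicator_of_mem (mem_Iio.2 hu), inner_eval ht hu]
        · rw [indicator_of_notMem (by simpa using hu)]
          have : Set.Ioo (0:ℝ) (z₀ - u) = ∅ := Set.Ioo_eq_empty (by simp; linarith [not_lt.1 hu])
          rw [this]
          simp
      rw [houter, lintegral_indicator measurableSet_Iio]
    rw [step1]
    -- Hölder
    have hconj : Real.HolderConjugate 2 2 := Real.HolderConjugate.two_two
    have holder := ENNReal.lintegral_mul_le_Lp_mul_Lq (volume.restrict (Set.Iio z₀)) hconj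
      (f := fun u => ENNReal.ofReal ‖g' u‖) (g := fun u => ENNReal.ofReal (h u))
      (by exact (hg'm.norm.ennreal_ofReal).aemeasurable)
      (by exact (hhm.ennreal_ofReal).aemeasurable)
    simp only [Pi.mul_apply] at holder
    refine le_trans holder ?_
    have fac1 : (∫⁻ u in Set.Iio z₀, ENNReal.ofReal ‖g' u‖ ^ (2:ℝ)) ^ (1/(2:ℝ))
        ≤ eLpNorm g' 2 volume := by
      rw [eLpNorm_eq_lintegral_rpow_enorm_toReal (by norm_num) (by norm_num)]
      simp only [ENNReal.toReal_ofNat]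
      apply ENNReal.rpow_le_rpow _ (by norm_num)
      calc ∫⁻ u in Set.Iio z₀, ENNReal.ofReal ‖g' u‖ ^ (2:ℝ)
          = ∫⁻ u in Set.Iio z₀, (‖g' u‖₊ : ENNReal) ^ (2:ℝ) := by
            apply setLIntegral_congr_fun measurableSet_Iio (fun u _ => ?_)
            rw [ofReal_norm, enorm_eq_nnnorm]
        _ ≤ ∫⁻ u, (‖g' u‖₊ : ENNReal) ^ (2:ℝ) := setLIntegral_le_lintegral _ _
    have fac2 : (∫⁻ u in Set.Iio z₀, ENNReal.ofReal (h u) ^ (2:ℝ)) ^ (1/(2:ℝ))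
        = ENNReal.ofReal (Real.sqrt K₀ * t ^ (-(3:ℝ)/4)) := by
      have hstep : ∫⁻ u in Set.Iio z₀, ENNReal.ofReal (h u) ^ (2:ℝ)
          = ∫⁻ u in Set.Iio z₀, ENNReal.ofReal (t⁻¹ * phi (Real.sqrt t * (u - z₀))) := by
        apply setLIntegral_congr_fun measurableSet_Iio ?_
        intro u hu
        have hu' : u < z₀ := mem_Iio.1 hu
        have hhu : 0 ≤ h u := by
          apply div_nonneg (one_sub_exp_nonneg (by positivity))
          nlinarith
        dsimp only
        rw [ENNReal.ofReal_rpow_of_nonneg hhu (by norm_num), Real.rpow_two,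
          h_sq_eq ht hu']
      rw [hstep]
      have hsplit : ∫⁻ u in Set.Iio z₀, ENNReal.ofReal (t⁻¹ * phi (Real.sqrt t * (u - z₀)))
          = ENNReal.ofReal t⁻¹
            * ∫⁻ u in Set.Iio z₀, ENNReal.ofReal (phi (Real.sqrt t * (u - z₀))) := by
        simp_rw [ENNReal.ofReal_mul (inv_nonneg.2 ht.le)]
        rw [lintegral_const_mul' _ _ ENNReal.ofReal_ne_top]
      rw [hsplit, subst_lemma (Real.sqrt_pos.2 ht) z₀ _ phi_meas.ennreal_ofReal]
      rw [← ofReal_integral_eq_lintegral_ofReal phi_int_Iio (ae_of_all _ phi_nonneg)]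
      rw [← hK₀_phi]
      rw [← ENNReal.ofReal_mul (by positivity), ← ENNReal.ofReal_mul (by positivity)]
      rw [ENNReal.ofReal_rpow_of_nonneg (by positivity) (by norm_num)]
      congr 1
      have h1 : t⁻¹ * ((Real.sqrt t)⁻¹ * K₀) = t ^ (-(3:ℝ)/2) * K₀ := by
        rw [← mul_assoc]
        congr 1
        rw [Real.sqrt_eq_rpow, ← Real.rpow_neg_one t, ← Real.rpow_neg ht.le,
          ← Real.rpow_add ht]
        congr 1
        norm_num
      rw [h1, Real.mul_rpow (Real.rpow_nonneg ht.le _) hK₀_nonneg,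
        ← Real.rpow_mul ht.le, Real.sqrt_eq_rpow]
      rw [show (-(3:ℝ)/2 * (1/2)) = -(3:ℝ)/4 by norm_num]
      ring
    exact le_trans (mul_le_mul' fac1 (le_of_eq fac2)) le_rfl
  have hfin : eLpNorm g' 2 volume ≠ ⊤ := by
    rw [← eLpNorm_congr_ae hgg']
    exact hg.2.ne
  calc (∫⁻ p in S, F p ∂(volume : Measure (ℝ × ℝ))).toReal
      ≤ (eLpNorm g' 2 volume * ENNReal.ofReal (Real.sqrt K₀ * t ^ (-(3:ℝ)/4))).toReal :=
        ENNReal.toReal_mono (ENNReal.mul_ne_top hfin ENNReal.ofReal_ne_top) key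
    _ = (eLpNorm g' 2 volume).toReal * (Real.sqrt K₀ * t ^ (-(3:ℝ)/4)) := by
        rw [ENNReal.toReal_mul, ENNReal.toReal_ofReal (by positivity)]
    _ = Real.sqrt K₀ * (eLpNorm g' 2 volume).toReal * t ^ (-(3:ℝ)/4) := by ring
end

section
/- Let q̂₀ ∈ H¹(ℝ) and t > 0, z₀ ∈ ℝ. Define E(u,v) := cos(2 arg(u+iv−z₀)) q̂₀(u) + (1 − cos(2 arg(u+iv−z₀))) q̂₀(z₀) on the sectors Ω₊ ∪ Ω₋ where 3π/4 < arg(z−z₀) < π or −π/4 < arg(z−z₀) < 0. Then for all u+iv in these sectors, |∂̄E(u,v)| ≤ (1/2)|q̂₀'(u)| + ‖q̂₀'‖_{L²(ℝ)} ((u−z₀)² + v²)^{−1/4}, where ∂̄ = (1/2)(∂_u + i∂_v). -/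
open MeasureTheory Real Complex

set_option maxHeartbeats 4000000 in
private lemma holder_half_aux (q₀ q₀' : ℝ → ℂ) (hderiv : ∀ x, HasDerivAt q₀ (q₀' x) x)
    (hq' : MemLp q₀' 2 (volume : Measure ℝ)) (a b : ℝ) :
    ‖q₀ b - q₀ a‖ ≤ (eLpNorm q₀' 2 (volume : Measure ℝ)).toReal * |b - a| ^ ((1:ℝ)/2) := by
  have hfin : (volume : Measure ℝ) (Set.uIoc a b) < ⊤ := by
    rw [Set.uIoc, Real.volume_Ioc]
    exact ENNReal.ofReal_lt_top
  haveI : IsFiniteMeasure ((volume : Measure ℝ).restrict (Set.uIoc a b)) :=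
    ⟨by rwa [Measure.restrict_apply_univ]⟩
  have hint : IntegrableOn q₀' (Set.uIoc a b) volume :=
    (hq'.restrict (Set.uIoc a b)).integrable one_le_two
  have hii : IntervalIntegrable q₀' volume a b := intervalIntegrable_iff.mpr hint
  have hftc : ∫ x in a..b, q₀' x = q₀ b - q₀ a :=
    intervalIntegral.integral_eq_sub_of_hasDerivAt (fun x _ => hderiv x) hii
  rw [← hftc]
  have h0 : ‖∫ x in a..b, q₀' x‖ ≤ ∫ x in Set.uIoc a b, ‖q₀' x‖ :=
    intervalIntegral.norm_integral_le_integral_norm_uIoc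
  refine h0.trans ?_
  set μI := (volume : Measure ℝ).restrict (Set.uIoc a b)
  have h1 : ENNReal.ofReal (∫ x, ‖q₀' x‖ ∂μI) = eLpNorm q₀' 1 μI := by
    rw [ofReal_integral_norm_eq_lintegral_enorm hint, eLpNorm_one_eq_lintegral_enorm]
  have h2 : eLpNorm q₀' 1 μI ≤ eLpNorm q₀' 2 μI * (μI Set.univ) ^ ((1:ℝ)/2) := by
    have := eLpNorm_le_eLpNorm_mul_rpow_measure_univ (p := 1) (q := 2)
      (by norm_num) (μ := μI) (hq'.1.restrict (s := Set.uIoc a b))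
    convert this using 2
    norm_num
  have h3 : eLpNorm q₀' 2 μI ≤ eLpNorm q₀' 2 (volume : Measure ℝ) :=
    eLpNorm_mono_measure _ Measure.restrict_le_self
  have h4 : μI Set.univ = ENNReal.ofReal |b - a| := by
    rw [Measure.restrict_apply_univ, Set.uIoc, Real.volume_Ioc]
    congr 1
    rcases le_total a b with h | h
    · rw [max_eq_right h, min_eq_left h, _root_.abs_of_nonneg (by linarith)]
    · rw [max_eq_left h, min_eq_right h, _root_.abs_of_nonpos (by linarith)]; ring
  have h5 : eLpNorm q₀' 1 μI ≤ eLpNorm q₀' 2 volume * ENNReal.ofReal (|b - a| ^ ((1:ℝ)/2)) := by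
    refine h2.trans ?_
    rw [h4, ← ENNReal.ofReal_rpow_of_nonneg (abs_nonneg _) (by norm_num)]
    exact mul_le_mul' h3 le_rfl
  have hfin2 : eLpNorm q₀' 2 volume * ENNReal.ofReal (|b - a| ^ ((1:ℝ)/2)) ≠ ⊤ :=
    ENNReal.mul_ne_top hq'.2.ne ENNReal.ofReal_ne_top
  have := ENNReal.toReal_mono hfin2 (h1.le.trans h5)
  rw [ENNReal.toReal_ofReal (by positivity)] at this
  refine this.trans_eq ?_
  rw [ENNReal.toReal_mul, ENNReal.toReal_ofReal (by positivity)]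

set_option maxHeartbeats 4000000 in
private lemma fderiv_aux (q₀ q₀' : ℝ → ℂ) (hderiv : ∀ x, HasDerivAt q₀ (q₀' x) x) (z₀ u v : ℝ)
    (hr : (u - z₀) * (u - z₀) + v * v ≠ 0) :
    ∃ D : ℝ × ℝ →L[ℝ] ℂ, HasFDerivAt
      (fun p : ℝ × ℝ => (((((p.1 - z₀) * (p.1 - z₀) - p.2 * p.2) * (((p.1 - z₀) * (p.1 - z₀) + p.2 * p.2))⁻¹ : ℝ) : ℂ))
        * (q₀ p.1 - q₀ z₀) + q₀ z₀) D (u, v)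
      ∧ D (1, 0) = (q₀ u - q₀ z₀) * (4*((u:ℂ)-z₀)*((v:ℂ)*v)) * ((((u:ℂ)-z₀)*((u:ℂ)-z₀)+(v:ℂ)*v)^2)⁻¹
          + ((((u-z₀)*(u-z₀)-v*v) * (((u-z₀)*(u-z₀)+v*v))⁻¹ : ℝ) : ℂ) * q₀' u
      ∧ D (0, 1) = (q₀ u - q₀ z₀) * (-(4*((u:ℂ)-z₀)*(((u:ℂ)-z₀)*v))) * ((((u:ℂ)-z₀)*((u:ℂ)-z₀)+(v:ℂ)*v)^2)⁻¹ := by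
  have h1 : ((u:ℂ) - z₀) * ((u:ℂ) - z₀) + (v:ℂ)*(v:ℂ) ≠ 0 := by
    intro h
    apply hr
    have : (((u - z₀) * (u - z₀) + v * v : ℝ) : ℂ) = 0 := by push_cast; rw [← h]
    exact_mod_cast this
  have hx1 : HasFDerivAt (fun p : ℝ × ℝ => p.1 - z₀) (ContinuousLinearMap.fst ℝ ℝ ℝ) (u, v) :=
    hasFDerivAt_fst.sub_const z₀
  have hy1 : HasFDerivAt (fun p : ℝ × ℝ => p.2) (ContinuousLinearMap.snd ℝ ℝ ℝ) (u, v) :=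
    hasFDerivAt_snd
  have hf := (hx1.mul hx1).sub (hy1.mul hy1)
  have hg := (hx1.mul hx1).add (hy1.mul hy1)
  have hinv : HasFDerivAt (fun y : ℝ => y⁻¹)
      (ContinuousLinearMap.smulRight (1 : ℝ →L[ℝ] ℝ) (-(((u - z₀) * (u - z₀) + v * v) ^ 2)⁻¹))
      ((fun p : ℝ × ℝ => (p.1 - z₀) * (p.1 - z₀) + p.2 * p.2) (u, v)) :=
    (hasDerivAt_inv hr).hasFDerivAt
  have hginv := hinv.comp (u, v) hg
  have hc := hf.mul hginv
  have hoc := Complex.ofRealCLM.hasFDerivAt.comp (u, v) hc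
  have hQ : HasFDerivAt (fun p : ℝ × ℝ => q₀ p.1 - q₀ z₀)
      ((ContinuousLinearMap.smulRight (1 : ℝ →L[ℝ] ℝ) (q₀' u)).comp
        (ContinuousLinearMap.fst ℝ ℝ ℝ)) (u, v) :=
    ((hderiv u).hasFDerivAt.comp (u, v) hasFDerivAt_fst).sub_const (q₀ z₀)
  have hF := (hoc.mul hQ).add_const (q₀ z₀)
  refine ⟨_, hF, ?_, ?_⟩
  · simp only [ContinuousLinearMap.add_apply, ContinuousLinearMap.sub_apply,
      ContinuousLinearMap.smul_apply, ContinuousLinearMap.comp_apply,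
      ContinuousLinearMap.smulRight_apply, ContinuousLinearMap.one_apply,
      ContinuousLinearMap.coe_fst', ContinuousLinearMap.coe_snd', Function.comp_apply,
      Complex.ofRealCLM_apply, smul_eq_mul, Complex.real_smul, Pi.mul_apply, Pi.sub_apply,
      Pi.add_apply]
    push_cast
    field_simp
    ring
  · simp only [ContinuousLinearMap.add_apply, ContinuousLinearMap.sub_apply,
      ContinuousLinearMap.smul_apply, ContinuousLinearMap.comp_apply,
      ContinuousLinearMap.smulRight_apply, ContinuousLinearMap.one_apply,
      ContinuousLinearMap.coe_fst', ContinuousLinearMap.coe_snd', Function.comp_apply,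
      Complex.ofRealCLM_apply, smul_eq_mul, Complex.real_smul, Pi.mul_apply, Pi.sub_apply,
      Pi.add_apply]
    push_cast
    field_simp
    ring

set_option maxHeartbeats 4000000 in
/-- Bound on the `∂̄`-derivative of the extension
`E(u,v) = cos(2 arg(u+iv−z₀)) q̂₀(u) + (1 − cos(2 arg(u+iv−z₀))) q̂₀(z₀)`
in the sectors `3π/4 < arg(z−z₀) < π` and `−π/4 < arg(z−z₀) < 0`. -/
theorem dbar_extension_estimate (q₀ q₀' : ℝ → ℂ)
    (hderiv : ∀ x, HasDerivAt q₀ (q₀' x) x)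
    (hq : MemLp q₀ 2 (volume : Measure ℝ))
    (hq' : MemLp q₀' 2 (volume : Measure ℝ))
    (t z₀ : ℝ) (ht : 0 < t)
    (E : ℝ × ℝ → ℂ)
    (hE : ∀ p : ℝ × ℝ,
      E p = (Real.cos (2 * Complex.arg ((p.1 : ℂ) + (p.2 : ℂ) * Complex.I - (z₀ : ℂ))) : ℂ)
              * q₀ p.1 +
            (1 - (Real.cos (2 * Complex.arg ((p.1 : ℂ) + (p.2 : ℂ) * Complex.I - (z₀ : ℂ))) : ℂ))
              * q₀ z₀)
    (u v : ℝ)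
    (hsector :
      (3 * π / 4 < Complex.arg ((u : ℂ) + (v : ℂ) * Complex.I - (z₀ : ℂ)) ∧
        Complex.arg ((u : ℂ) + (v : ℂ) * Complex.I - (z₀ : ℂ)) < π) ∨
      (-π / 4 < Complex.arg ((u : ℂ) + (v : ℂ) * Complex.I - (z₀ : ℂ)) ∧
        Complex.arg ((u : ℂ) + (v : ℂ) * Complex.I - (z₀ : ℂ)) < 0)) :
    ‖(1 / 2 : ℂ) * ((fderiv ℝ E (u, v)) (1, 0) + Complex.I * (fderiv ℝ E (u, v)) (0, 1))‖ ≤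
      (1 / 2) * ‖q₀' u‖ +
        (eLpNorm q₀' 2 (volume : Measure ℝ)).toReal *
          ((u - z₀) ^ 2 + v ^ 2) ^ (-(1 : ℝ) / 4) := by
  -- the point is away from z₀
  have hw : (u : ℂ) + (v : ℂ) * Complex.I - (z₀ : ℂ) ≠ 0 := by
    intro h
    rw [h, Complex.arg_zero] at hsector
    have hπ := Real.pi_pos
    rcases hsector with ⟨h1, _⟩ | ⟨_, h2⟩ <;> linarith
  have hr2pos : 0 < (u - z₀) * (u - z₀) + v * v := by
    rcases lt_or_eq_of_le (by nlinarith [sq_nonneg (u - z₀), sq_nonneg v] :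
        (0:ℝ) ≤ (u - z₀) * (u - z₀) + v * v) with h | h
    · exact h
    · exfalso
      apply hw
      have hx0 : u - z₀ = 0 := by nlinarith [sq_nonneg (u - z₀), sq_nonneg v]
      have hv0 : v = 0 := by nlinarith [sq_nonneg (u - z₀), sq_nonneg v]
      have hu : u = z₀ := by linarith
      rw [hu, hv0]
      push_cast
      ring
  have hr : (u - z₀) * (u - z₀) + v * v ≠ 0 := hr2pos.ne'
  -- The extension agrees with a rational function near (u,v)
  set F : ℝ × ℝ → ℂ := fun p : ℝ × ℝ =>
    (((((p.1 - z₀) * (p.1 - z₀) - p.2 * p.2) * (((p.1 - z₀) * (p.1 - z₀) + p.2 * p.2))⁻¹ : ℝ) : ℂ))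
      * (q₀ p.1 - q₀ z₀) + q₀ z₀ with hFdef
  have hEF : E =ᶠ[nhds (u, v)] F := by
    have hopen : IsOpen {p : ℝ × ℝ | (p.1 - z₀) * (p.1 - z₀) + p.2 * p.2 ≠ 0} := by
      apply isOpen_ne.preimage
      fun_prop
    refine Filter.eventuallyEq_of_mem (hopen.mem_nhds hr) ?_
    intro p hp
    have hp : (p.1 - z₀) * (p.1 - z₀) + p.2 * p.2 ≠ 0 := hp
    have hwp : (p.1 : ℂ) + (p.2 : ℂ) * Complex.I - (z₀ : ℂ) ≠ 0 := by
      intro h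
      apply hp
      have hre := congrArg Complex.re h
      have him := congrArg Complex.im h
      simp at hre him
      nlinarith [hre, him]
    have hre : ((p.1 : ℂ) + (p.2 : ℂ) * Complex.I - (z₀ : ℂ)).re = p.1 - z₀ := by simp
    have him : ((p.1 : ℂ) + (p.2 : ℂ) * Complex.I - (z₀ : ℂ)).im = p.2 := by simp
    have habs : (‖(p.1 : ℂ) + (p.2 : ℂ) * Complex.I - (z₀ : ℂ)‖) ^ 2
        = (p.1 - z₀) * (p.1 - z₀) + p.2 * p.2 := by
      rw [Complex.sq_norm, Complex.normSq_apply, hre, him]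
    have habs0 : ‖(p.1 : ℂ) + (p.2 : ℂ) * Complex.I - (z₀ : ℂ)‖ ≠ 0 :=
      norm_ne_zero_iff.mpr hwp
    have hcos : Real.cos (2 * Complex.arg ((p.1 : ℂ) + (p.2 : ℂ) * Complex.I - (z₀ : ℂ)))
        = ((p.1 - z₀) * (p.1 - z₀) - p.2 * p.2) * (((p.1 - z₀) * (p.1 - z₀) + p.2 * p.2))⁻¹ := by
      rw [Real.cos_two_mul, Complex.cos_arg hwp, hre, div_pow, habs]
      field_simp
      have hS : (p.1 - z₀) ^ 2 + p.2 ^ 2 ≠ 0 := by rw [sq, sq]; exact hp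
      rw [div_sub_one hS]; ring
    rw [hE p, hFdef, hcos]
    push_cast
    ring
  obtain ⟨D, hF, hv1, hv0⟩ := fderiv_aux q₀ q₀' hderiv z₀ u v hr
  have hfd : fderiv ℝ E (u, v) = D := hEF.fderiv_eq.trans hF.fderiv
  rw [hfd, hv1, hv0]
  -- abbreviations
  set x : ℝ := u - z₀ with hxdef
  set r2 : ℝ := x * x + v * v with hr2def
  set M : ℝ := (eLpNorm q₀' 2 (volume : Measure ℝ)).toReal with hMdef
  set Q : ℂ := q₀ u - q₀ z₀ with hQdef
  have hM0 : 0 ≤ M := ENNReal.toReal_nonneg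
  have hr2c : (((r2 : ℝ)) : ℂ) ≠ 0 := by exact_mod_cast hr
  have ha : ((u:ℂ) - (z₀:ℂ)) = ((x : ℝ) : ℂ) := by rw [hxdef]; push_cast; ring
  have hd : ((x:ℝ):ℂ) * ((x:ℝ):ℂ) + ((v:ℝ):ℂ) * ((v:ℝ):ℂ) ≠ 0 := by
    have : (((x * x + v * v : ℝ)) : ℂ) ≠ 0 := by rw [← hr2def]; exact hr2c
    push_cast at this
    convert this using 2
  have hc1 : (((x*x-v*v) * (r2)⁻¹ : ℝ) : ℂ)
      = (((x:ℝ):ℂ) * ((x:ℝ):ℂ) - ((v:ℝ):ℂ) * ((v:ℝ):ℂ))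
        * ((((x:ℝ):ℂ) * ((x:ℝ):ℂ) + ((v:ℝ):ℂ) * ((v:ℝ):ℂ)))⁻¹ := by
    rw [hr2def]; push_cast; ring
  have hc2 : (((r2^2 : ℝ)) : ℂ) = ((((x:ℝ):ℂ) * ((x:ℝ):ℂ) + ((v:ℝ):ℂ) * ((v:ℝ):ℂ)))^2 := by
    rw [hr2def]; push_cast; ring
  have hc3 : (((2*x*v : ℝ)) : ℂ) = 2 * ((x:ℝ):ℂ) * ((v:ℝ):ℂ) := by push_cast; ring
  -- rewrite the dbar expression
  have key : (1/2 : ℂ) * ((Q * (4*((u:ℂ)-z₀)*((v:ℂ)*v)) * ((((u:ℂ)-z₀)*((u:ℂ)-z₀)+(v:ℂ)*v)^2)⁻¹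
          + (((x*x-v*v) * (r2)⁻¹ : ℝ) : ℂ) * q₀' u)
        + Complex.I * (Q * (-(4*((u:ℂ)-z₀)*(((u:ℂ)-z₀)*v))) * ((((u:ℂ)-z₀)*((u:ℂ)-z₀)+(v:ℂ)*v)^2)⁻¹))
      = ((2*x*v : ℝ) : ℂ) * ((v:ℂ) - Complex.I*(x:ℂ)) * (((r2^2 : ℝ)) : ℂ)⁻¹ * Q
        + (((x*x-v*v) * (r2)⁻¹ : ℝ) : ℂ) * q₀' u * (1/2) := by
    rw [ha, hc1, hc2, hc3]
    ring
  rw [key]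
  -- norm estimates
  have hnorm1 : ‖((2*x*v : ℝ) : ℂ) * ((v:ℂ) - Complex.I*(x:ℂ)) * (((r2^2 : ℝ)) : ℂ)⁻¹ * Q‖
      = |2*x*v| * Real.sqrt r2 * (r2^2)⁻¹ * ‖Q‖ := by
    rw [norm_mul, norm_mul, norm_mul, norm_inv]
    congr 2
    · congr 1
      · exact Complex.norm_real _
      · rw [Complex.norm_def]
        congr 1
        simp [Complex.normSq_apply]
        ring
    · rw [Complex.norm_real, Real.norm_eq_abs, _root_.abs_of_nonneg (by positivity)]
  have hnorm2 : ‖(((x*x-v*v) * (r2)⁻¹ : ℝ) : ℂ) * q₀' u * (1/2)‖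
      = |(x*x-v*v) * (r2)⁻¹| * ‖q₀' u‖ * (1/2) := by
    rw [norm_mul, norm_mul, Complex.norm_real, Real.norm_eq_abs]
    norm_num
  have hQb : ‖Q‖ ≤ M * |x| ^ ((1:ℝ)/2) := by
    have := holder_half_aux q₀ q₀' hderiv hq' z₀ u
    rwa [hMdef, hxdef]
  have hxb : |x| ^ ((1:ℝ)/2) ≤ r2 ^ ((1:ℝ)/4) := by
    have h1 : |x| ≤ r2 ^ ((1:ℝ)/2) := by
      rw [← Real.sqrt_eq_rpow]
      apply Real.abs_le_sqrt
      rw [hr2def]; nlinarith [sq_nonneg v]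
    calc |x| ^ ((1:ℝ)/2) ≤ (r2 ^ ((1:ℝ)/2)) ^ ((1:ℝ)/2) :=
          Real.rpow_le_rpow (abs_nonneg x) h1 (by norm_num)
      _ = r2 ^ ((1:ℝ)/4) := by
          rw [← Real.rpow_mul hr2pos.le]; norm_num
  have hQb2 : ‖Q‖ ≤ M * r2 ^ ((1:ℝ)/4) :=
    hQb.trans (mul_le_mul_of_nonneg_left hxb hM0)
  have hcb : |(x*x-v*v) * (r2)⁻¹| ≤ 1 := by
    rw [abs_mul, abs_inv, _root_.abs_of_pos hr2pos]
    have habs : |x*x - v*v| ≤ r2 := by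
      rw [abs_le, hr2def]
      constructor <;> nlinarith [sq_nonneg x, sq_nonneg v]
    calc |x*x - v*v| * r2⁻¹ ≤ r2 * r2⁻¹ :=
          mul_le_mul_of_nonneg_right habs (inv_nonneg.mpr hr2pos.le)
      _ = 1 := mul_inv_cancel₀ hr
  have h2xv : |2*x*v| ≤ r2 := by
    rw [abs_le, hr2def]
    constructor <;> nlinarith [sq_nonneg (x - v), sq_nonneg (x + v)]
  have hT1 : |2*x*v| * Real.sqrt r2 * (r2^2)⁻¹ * ‖Q‖ ≤ M * r2 ^ (-(1:ℝ)/4) := by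
    have step : |2*x*v| * Real.sqrt r2 * (r2^2)⁻¹ * ‖Q‖
        ≤ r2 * Real.sqrt r2 * (r2^2)⁻¹ * (M * r2 ^ ((1:ℝ)/4)) := by
      gcongr
    refine step.trans_eq ?_
    rw [Real.sqrt_eq_rpow]
    rw [show ((r2^2)⁻¹ : ℝ) = r2 ^ (-(2:ℝ)) by
      rw [← Real.rpow_natCast r2 2, ← Real.rpow_neg hr2pos.le]; norm_num]
    rw [show r2 * r2 ^ ((1:ℝ)/2) * r2 ^ (-(2:ℝ)) * (M * r2 ^ ((1:ℝ)/4))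
        = M * (r2 * (r2 ^ ((1:ℝ)/2) * (r2 ^ (-(2:ℝ)) * r2 ^ ((1:ℝ)/4)))) from by ring]
    congr 1
    rw [← Real.rpow_add hr2pos, ← Real.rpow_add hr2pos]
    nth_rewrite 1 [← Real.rpow_one r2]
    rw [← Real.rpow_add hr2pos]
    norm_num
  have hT2 : |(x*x-v*v) * (r2)⁻¹| * ‖q₀' u‖ * (1/2) ≤ (1/2) * ‖q₀' u‖ := by
    calc |(x*x-v*v) * (r2)⁻¹| * ‖q₀' u‖ * (1/2) ≤ 1 * ‖q₀' u‖ * (1/2) := by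
          apply mul_le_mul_of_nonneg_right _ (by norm_num)
          exact mul_le_mul_of_nonneg_right hcb (norm_nonneg _)
      _ = (1/2) * ‖q₀' u‖ := by ring
  have hbase : (u - z₀) ^ 2 + v ^ 2 = r2 := by rw [hr2def, hxdef]; ring
  calc ‖((2*x*v : ℝ) : ℂ) * ((v:ℂ) - Complex.I*(x:ℂ)) * (((r2^2 : ℝ)) : ℂ)⁻¹ * Q
        + (((x*x-v*v) * (r2)⁻¹ : ℝ) : ℂ) * q₀' u * (1/2)‖
      ≤ ‖((2*x*v : ℝ) : ℂ) * ((v:ℂ) - Complex.I*(x:ℂ)) * (((r2^2 : ℝ)) : ℂ)⁻¹ * Q‖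
        + ‖(((x*x-v*v) * (r2)⁻¹ : ℝ) : ℂ) * q₀' u * (1/2)‖ := norm_add_le _ _
    _ ≤ (1/2) * ‖q₀' u‖ + M * r2 ^ (-(1:ℝ)/4) := by
        rw [hnorm1, hnorm2]; linarith
    _ = (1/2) * ‖q₀' u‖ + M * ((u - z₀) ^ 2 + v ^ 2) ^ (-(1:ℝ)/4) := by rw [hbase]
end

section
/- Let r : ℝ → ℂ be measurable with |r(s)| ≤ ρ < 1 for all s, and suppose log(1 − |r(·)|²) ∈ L¹(ℝ). Define δ(z) := exp( (1/(2πi)) ∫_{−∞}^{z₀} log(1 − |r(s)|²)/(s − z) ds ) for Im z > 0. Then (1 − ρ²)^{1/2} ≤ |δ(z)| ≤ (1 − ρ²)^{−1/2}. -/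
open MeasureTheory Real Complex

/-- Bounds on the modulus of
`δ(z) = exp((1/(2πi)) ∫_{−∞}^{z₀} log(1−|r(s)|²)/(s−z) ds)` for `Im z > 0`:
`(1−ρ²)^{1/2} ≤ |δ(z)| ≤ (1−ρ²)^{−1/2}`. -/
theorem delta_modulus_bounds (r : ℝ → ℂ) (ρ z₀ : ℝ) (hρ : ρ < 1)
    (hr_meas : Measurable r) (hr_bd : ∀ s, ‖r s‖ ≤ ρ)
    (hlog : Integrable (fun s => Real.log (1 - ‖r s‖ ^ 2)) (volume : Measure ℝ))
    (z : ℂ) (hz : 0 < z.im) :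
    Real.sqrt (1 - ρ ^ 2) ≤
      ‖Complex.exp ((1 / (2 * (π : ℂ) * Complex.I)) *
        ∫ s in Set.Iio z₀, ((Real.log (1 - ‖r s‖ ^ 2) : ℂ) / ((s : ℂ) - z)))‖ ∧
    ‖Complex.exp ((1 / (2 * (π : ℂ) * Complex.I)) *
        ∫ s in Set.Iio z₀, ((Real.log (1 - ‖r s‖ ^ 2) : ℂ) / ((s : ℂ) - z)))‖ ≤
      (Real.sqrt (1 - ρ ^ 2))⁻¹ := by
  have hρ0 : 0 ≤ ρ := le_trans (norm_nonneg _) (hr_bd 0)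
  have h1ρ : 0 < 1 - ρ ^ 2 := by nlinarith
  set v := z.im with hv
  set u := z.re with hu
  set L : ℝ → ℝ := fun s => Real.log (1 - ‖r s‖ ^ 2) with hLdef
  set c := Real.log (1 - ρ ^ 2) with hcdef
  have hc0 : c ≤ 0 := Real.log_nonpos (le_of_lt h1ρ) (by nlinarith)
  have hsq : ∀ s, ‖r s‖ ^ 2 ≤ ρ ^ 2 := fun s =>
    pow_le_pow_left₀ (norm_nonneg _) (hr_bd s) 2
  have hLc : ∀ s, c ≤ L s := fun s =>
    Real.log_le_log h1ρ (by nlinarith [hsq s])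
  have hL0 : ∀ s, L s ≤ 0 := fun s =>
    Real.log_nonpos (by nlinarith [hsq s]) (by nlinarith [sq_nonneg ‖r s‖])
  have hLmeas : Measurable L :=
    Real.measurable_log.comp (measurable_const.sub ((hr_meas.norm).pow_const 2))
  -- Poisson kernel
  set P : ℝ → ℝ := fun s => v / ((s - u) ^ 2 + v ^ 2) with hPdef
  have hdenom : ∀ s : ℝ, 0 < (s - u) ^ 2 + v ^ 2 := fun s => by positivity
  have hPpos : ∀ s, 0 < P s := fun s => div_pos hz (hdenom s)
  have hPeq : ∀ s, P s = v⁻¹ * (1 + ((s - u) / v) ^ 2)⁻¹ := by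
    intro s
    simp only [hPdef]
    field_simp
    ring
  have hPint : Integrable P := by
    have h1 : Integrable (fun x : ℝ => (1 + (x / v) ^ 2)⁻¹) :=
      integrable_inv_one_add_sq.comp_div (ne_of_gt hz)
    have h2 : Integrable (fun x : ℝ => (1 + ((x - u) / v) ^ 2)⁻¹) :=
      h1.comp_sub_right u
    have h3 := h2.const_mul v⁻¹
    exact h3.congr (Filter.Eventually.of_forall fun s => (hPeq s).symm)
  have hPtot : ∫ s : ℝ, P s = π := by
    calc ∫ s : ℝ, P s = ∫ s : ℝ, v⁻¹ * (1 + ((s - u) / v) ^ 2)⁻¹ := by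
          simp_rw [hPeq]
      _ = v⁻¹ * ∫ s : ℝ, (1 + ((s - u) / v) ^ 2)⁻¹ := integral_const_mul _ _
      _ = v⁻¹ * ∫ s : ℝ, (1 + (s / v) ^ 2)⁻¹ := by
          rw [integral_sub_right_eq_self (fun x : ℝ => (1 + (x / v) ^ 2)⁻¹) u]
      _ = v⁻¹ * (|v| • ∫ s : ℝ, (1 + s ^ 2)⁻¹) := by
          rw [Measure.integral_comp_div (fun x : ℝ => (1 + x ^ 2)⁻¹) v]
      _ = π := by
          rw [integral_univ_inv_one_add_sq, abs_of_pos hz, smul_eq_mul]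
          field_simp
  have hPIio : ∫ s in Set.Iio z₀, P s ≤ π := by
    rw [← hPtot]
    exact setIntegral_le_integral hPint
      (Filter.Eventually.of_forall fun s => (hPpos s).le)
  -- the complex integrand
  set F : ℝ → ℂ := fun s => (L s : ℂ) / ((s : ℂ) - z) with hFdef
  have hFmeas : Measurable F :=
    (Complex.measurable_ofReal.comp hLmeas).div
      (Complex.measurable_ofReal.sub measurable_const)
  have hFbd : ∀ s, ‖F s‖ ≤ v⁻¹ * |L s| := by
    intro s
    have h1 : v ≤ ‖(s : ℂ) - z‖ := by
      have := Complex.abs_im_le_norm ((s : ℂ) - z)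
      simp only [Complex.sub_im, Complex.ofReal_im, zero_sub, abs_neg] at this
      calc v ≤ |z.im| := le_abs_self _
        _ ≤ _ := this
    have h2 : ‖F s‖ = |L s| / ‖(s : ℂ) - z‖ := by
      simp [hFdef]
    rw [h2, inv_mul_eq_div]
    exact div_le_div_of_nonneg_left (abs_nonneg _) hz h1
  have hFint : Integrable F (volume.restrict (Set.Iio z₀)) := by
    refine Integrable.mono' ((hlog.abs.const_mul v⁻¹).restrict)
      hFmeas.aestronglyMeasurable ?_
    exact Filter.Eventually.of_forall hFbd
  -- imaginary part of the integrand
  have hFim : ∀ s : ℝ, (F s).im = L s * P s := by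
    intro s
    have hns : Complex.normSq ((s : ℂ) - z) = (s - u) ^ 2 + v ^ 2 := by
      simp [Complex.normSq_apply]
      ring
    simp only [hFdef, Complex.div_im, Complex.ofReal_im, Complex.ofReal_re,
      Complex.sub_im, Complex.sub_re, Complex.ofReal_im, hns]
    rw [hPdef]
    field_simp [ne_of_gt (hdenom s)]
    rw [hv]; ring
  have hIim : (∫ s in Set.Iio z₀, F s).im = ∫ s in Set.Iio z₀, L s * P s := by
    have h := integral_im hFint
    simp only [RCLike.im_eq_complex_im] at h
    rw [← h]
    exact integral_congr_ae (Filter.Eventually.of_forall fun s => hFim s)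
  -- integrability of L * P on Iio
  have hLPint : Integrable (fun s => L s * P s) (volume.restrict (Set.Iio z₀)) :=
    hFint.im.congr (Filter.Eventually.of_forall fun s => hFim s)
  -- bounds on the imaginary part
  have hupper : ∫ s in Set.Iio z₀, L s * P s ≤ 0 :=
    integral_nonpos fun s => mul_nonpos_of_nonpos_of_nonneg (hL0 s) (hPpos s).le
  have hlower : c * π ≤ ∫ s in Set.Iio z₀, L s * P s := by
    have h1 : ∫ s in Set.Iio z₀, c * P s ≤ ∫ s in Set.Iio z₀, L s * P s :=
      integral_mono ((hPint.const_mul c).restrict) hLPint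
        (fun s => mul_le_mul_of_nonneg_right (hLc s) (hPpos s).le)
    have h2 : ∫ s in Set.Iio z₀, c * P s = c * ∫ s in Set.Iio z₀, P s :=
      integral_const_mul _ _
    have h3 : c * π ≤ c * ∫ s in Set.Iio z₀, P s :=
      mul_le_mul_of_nonpos_left hPIio hc0
    linarith
  -- real part of the exponent
  have hre : ∀ w : ℂ, (1 / (2 * (π : ℂ) * Complex.I) * w).re = w.im / (2 * π) := by
    intro w
    have h1 : (1 / (2 * (π : ℂ) * Complex.I)) = (2 * (π : ℂ))⁻¹ * (-Complex.I) := by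
      rw [one_div, mul_inv, Complex.inv_I]
    rw [h1, mul_assoc]
    rw [show (2 * (π : ℂ))⁻¹ = (((2 * π)⁻¹ : ℝ) : ℂ) by push_cast; ring]
    rw [Complex.re_ofReal_mul]
    have h2 : (-Complex.I * w).re = w.im := by simp
    rw [h2, inv_mul_eq_div]
  set w : ℂ := ∫ s in Set.Iio z₀, F s with hwdef
  have hrw : (1 / (2 * (π : ℂ) * Complex.I) * w).re = w.im / (2 * π) := hre w
  have habs : ‖Complex.exp (1 / (2 * (π : ℂ) * Complex.I) * w)‖ =
      Real.exp (w.im / (2 * π)) := by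
    rw [Complex.norm_exp, hrw]
  have hwim : w.im = ∫ s in Set.Iio z₀, L s * P s := hIim
  have hπpos : (0 : ℝ) < π := Real.pi_pos
  -- exp(c/2) = sqrt(1-ρ²)
  have hsqrt : Real.sqrt (1 - ρ ^ 2) = Real.exp (c / 2) := by
    have h1 : Real.exp (c / 2) ^ 2 = 1 - ρ ^ 2 := by
      rw [← Real.exp_nat_mul, show ((2:ℕ):ℝ) * (c / 2) = c by push_cast; ring,
        Real.exp_log h1ρ]
    rw [← h1, Real.sqrt_sq (Real.exp_nonneg _)]
  constructor
  · rw [habs, hsqrt]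
    apply Real.exp_le_exp.mpr
    rw [hwim]
    rw [div_le_div_iff₀ two_pos (by positivity : (0:ℝ) < 2 * π)]
    nlinarith [hlower, hπpos]
  · rw [habs]
    have h1 : Real.exp (w.im / (2 * π)) ≤ 1 := by
      apply Real.exp_le_one_iff.mpr
      rw [hwim]
      exact div_nonpos_of_nonpos_of_nonneg hupper (by positivity)
    have h2 : (1 : ℝ) ≤ (Real.sqrt (1 - ρ ^ 2))⁻¹ := by
      rw [le_inv_comm₀ one_pos (Real.sqrt_pos.mpr h1ρ)]
      simpa using Real.sqrt_le_sqrt (by nlinarith : 1 - ρ ^ 2 ≤ 1)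
    linarith
end

section
/- For every t > 0 and every v ∈ ℝ, ∫_ℝ e^{−8tV²} |V − v|^{−1/2} dV ≤ C t^{−1/4}, where C is an absolute constant independent of v and t. -/
open MeasureTheory

lemma intervalIntegrable_abs_rpow {p : ℝ} (hp : -1 < p) (a b : ℝ) :
    IntervalIntegrable (fun x : ℝ => |x| ^ p) volume a b := by
  suffices h : ∀ c : ℝ, 0 ≤ c → IntervalIntegrable (fun x : ℝ => |x| ^ p) volume 0 c by
    have h' : ∀ c : ℝ, IntervalIntegrable (fun x : ℝ => |x| ^ p) volume 0 c := by
      intro c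
      rcases le_total 0 c with hc | hc
      · exact h c hc
      · rw [IntervalIntegrable.iff_comp_neg]
        simpa using h (-c) (by linarith)
    exact (h' a).symm.trans (h' b)
  intro c hc
  have := intervalIntegral.intervalIntegrable_rpow' (a := 0) (b := c) hp
  apply this.congr
  intro x hx
  rw [Set.uIoc_of_le hc] at hx
  show x ^ p = |x| ^ p
  rw [abs_of_nonneg hx.1.le]

/-- There is an absolute constant `C` such that for all `t > 0` and `v ∈ ℝ`,
`∫_ℝ e^{−8tV²} |V − v|^{−1/2} dV ≤ C t^{−1/4}`. -/
theorem gaussian_inverse_sqrt_estimate :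
    ∃ C : ℝ, 0 < C ∧ ∀ t : ℝ, 0 < t → ∀ v : ℝ,
      (∫ V : ℝ, Real.exp (-8 * t * V ^ 2) * |V - v| ^ (-(1 : ℝ) / 2)) ≤
        C * t ^ (-(1 : ℝ) / 4) := by
  refine ⟨4 + Real.sqrt (Real.pi / 8), by positivity, ?_⟩
  intro t ht v
  set r : ℝ := t ^ (-(1 : ℝ) / 2) with hrdef
  have hr0 : 0 < r := Real.rpow_pos_of_pos ht _
  set f : ℝ → ℝ := fun V => Real.exp (-8 * t * V ^ 2) * |V - v| ^ (-(1 : ℝ) / 2) with hfdef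
  have hf_nonneg : ∀ V, 0 ≤ f V := fun V =>
    mul_nonneg (Real.exp_pos _).le (Real.rpow_nonneg (abs_nonneg _) _)
  have hexp_le_one : ∀ V : ℝ, Real.exp (-8 * t * V ^ 2) ≤ 1 := by
    intro V
    rw [Real.exp_le_one_iff]
    nlinarith [sq_nonneg V]
  have hfg : ∀ V, f V ≤ |V - v| ^ (-(1 : ℝ) / 2) := fun V =>
    mul_le_of_le_one_left (Real.rpow_nonneg (abs_nonneg _) _) (hexp_le_one V)
  have hmeas : AEStronglyMeasurable f volume := by
    apply Measurable.aestronglyMeasurable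
    measurability
  have hgauss : Integrable (fun V : ℝ => Real.exp (-8 * t * V ^ 2)) := by
    have h8 : (0 : ℝ) < 8 * t := by linarith
    have := integrable_exp_neg_mul_sq h8
    simpa [neg_mul, mul_assoc] using this
  set A : Set ℝ := Set.Icc (v - r) (v + r) with hAdef
  have hA : MeasurableSet A := measurableSet_Icc
  have hab : v - r ≤ v + r := by linarith
  -- integrability of |V-v|^(-1/2) on A
  have hg_ii : ∀ a b : ℝ, IntervalIntegrable (fun V : ℝ => |V - v| ^ (-(1 : ℝ) / 2)) volume a b := by
    intro a b
    have := (intervalIntegrable_abs_rpow (p := -(1 : ℝ) / 2) (by norm_num)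
      (a - v) (b - v)).comp_sub_right v
    simpa using this
  have hg_int : IntegrableOn (fun V : ℝ => |V - v| ^ (-(1 : ℝ) / 2)) A := by
    rw [hAdef, integrableOn_Icc_iff_integrableOn_Ioc]
    have := hg_ii (v - r) (v + r)
    rwa [intervalIntegrable_iff, Set.uIoc_of_le hab] at this
  -- integrability of f on A
  have hfA : IntegrableOn f A := by
    apply hg_int.mono' hmeas.restrict
    filter_upwards with V
    rw [Real.norm_eq_abs, abs_of_nonneg (hf_nonneg V)]
    exact hfg V
  -- integrability of f on Aᶜ
  have hbound : ∀ V ∈ Aᶜ, f V ≤ r ^ (-(1 : ℝ) / 2) * Real.exp (-8 * t * V ^ 2) := by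
    intro V hV
    have hV' : r ≤ |V - v| := by
      simp only [hAdef, Set.mem_compl_iff, Set.mem_Icc, not_and_or, not_le] at hV
      rcases hV with h | h
      · rw [abs_of_nonpos (by linarith)]; linarith
      · rw [abs_of_nonneg (by linarith)]; linarith
    have : |V - v| ^ (-(1 : ℝ) / 2) ≤ r ^ (-(1 : ℝ) / 2) :=
      Real.rpow_le_rpow_of_nonpos hr0 hV' (by norm_num)
    calc f V ≤ Real.exp (-8 * t * V ^ 2) * r ^ (-(1 : ℝ) / 2) :=
          mul_le_mul_of_nonneg_left this (Real.exp_pos _).le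
      _ = r ^ (-(1 : ℝ) / 2) * Real.exp (-8 * t * V ^ 2) := mul_comm _ _
  have hh_int : Integrable (fun V : ℝ => r ^ (-(1 : ℝ) / 2) * Real.exp (-8 * t * V ^ 2)) :=
    hgauss.const_mul _
  have hfAc : IntegrableOn f Aᶜ := by
    apply (hh_int.integrableOn (s := Aᶜ)).mono' hmeas.restrict
    filter_upwards [ae_restrict_mem hA.compl] with V hV
    rw [Real.norm_eq_abs, abs_of_nonneg (hf_nonneg V)]
    exact hbound V hV
  have hf_int : Integrable f := by
    have := hfA.union hfAc
    rwa [Set.union_compl_self, integrableOn_univ] at this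
  -- split integral
  have hsplit : (∫ V, f V) = (∫ V in A, f V) + ∫ V in Aᶜ, f V :=
    (integral_add_compl hA hf_int).symm
  -- bound on A
  have habs_int : ∀ c : ℝ, 0 ≤ c → (∫ x in (0:ℝ)..c, |x| ^ (-(1 : ℝ) / 2)) = 2 * c ^ ((1:ℝ)/2) := by
    intro c hc
    have h1 : (∫ x in (0:ℝ)..c, |x| ^ (-(1 : ℝ) / 2)) = ∫ x in (0:ℝ)..c, x ^ (-(1 : ℝ) / 2) := by
      apply intervalIntegral.integral_congr
      intro x hx
      rw [Set.uIcc_of_le hc] at hx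
      show |x| ^ (-(1 : ℝ) / 2) = x ^ (-(1 : ℝ) / 2)
      rw [abs_of_nonneg hx.1]
    rw [h1, integral_rpow (Or.inl (by norm_num))]
    rw [Real.zero_rpow (by norm_num)]
    norm_num
    ring
  have hA_bound : (∫ V in A, f V) ≤ 4 * t ^ (-(1 : ℝ) / 4) := by
    have h1 : (∫ V in A, f V) ≤ ∫ V in A, |V - v| ^ (-(1 : ℝ) / 2) :=
      setIntegral_mono_on hfA hg_int hA (fun V _ => hfg V)
    have h2 : (∫ V in A, |V - v| ^ (-(1 : ℝ) / 2)) = 4 * t ^ (-(1 : ℝ) / 4) := by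
      have e1 : (∫ V in A, |V - v| ^ (-(1 : ℝ) / 2))
          = ∫ V in (v - r)..(v + r), |V - v| ^ (-(1 : ℝ) / 2) := by
        rw [intervalIntegral.integral_of_le hab, hAdef,
          MeasureTheory.integral_Icc_eq_integral_Ioc]
      have hii1 := hg_ii (v - r) v
      have hii2 := hg_ii v (v + r)
      have esplit : (∫ V in (v - r)..(v + r), |V - v| ^ (-(1 : ℝ) / 2))
          = (∫ V in (v - r)..v, |V - v| ^ (-(1 : ℝ) / 2))
            + ∫ V in v..(v + r), |V - v| ^ (-(1 : ℝ) / 2) :=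
        (intervalIntegral.integral_add_adjacent_intervals hii1 hii2).symm
      have e2 : (∫ V in v..(v + r), |V - v| ^ (-(1 : ℝ) / 2))
          = ∫ x in (0:ℝ)..r, |x| ^ (-(1 : ℝ) / 2) := by
        have := intervalIntegral.integral_comp_sub_right (a := v) (b := v + r)
          (fun x : ℝ => |x| ^ (-(1 : ℝ) / 2)) v
        simpa using this
      have e3 : (∫ V in (v - r)..v, |V - v| ^ (-(1 : ℝ) / 2))
          = ∫ x in (-r:ℝ)..0, |x| ^ (-(1 : ℝ) / 2) := by
        have := intervalIntegral.integral_comp_sub_right (a := v - r) (b := v)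
          (fun x : ℝ => |x| ^ (-(1 : ℝ) / 2)) v
        simpa using this
      have e4 : (∫ x in (-r:ℝ)..0, |x| ^ (-(1 : ℝ) / 2))
          = ∫ x in (0:ℝ)..r, |x| ^ (-(1 : ℝ) / 2) := by
        have := intervalIntegral.integral_comp_neg (a := (0:ℝ)) (b := r)
          (fun x : ℝ => |x| ^ (-(1 : ℝ) / 2))
        simpa using this.symm
      have e5 : r ^ ((1:ℝ)/2) = t ^ (-(1 : ℝ) / 4) := by
        rw [hrdef, ← Real.rpow_mul ht.le]
        norm_num
      rw [e1, esplit, e2, e3, e4, habs_int r hr0.le, e5]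
      ring
    exact h1.trans h2.le
  -- bound on Aᶜ
  have hAc_bound : (∫ V in Aᶜ, f V) ≤ Real.sqrt (Real.pi / 8) * t ^ (-(1 : ℝ) / 4) := by
    have h1 : (∫ V in Aᶜ, f V) ≤ ∫ V in Aᶜ, r ^ (-(1 : ℝ) / 2) * Real.exp (-8 * t * V ^ 2) :=
      setIntegral_mono_on hfAc (hh_int.integrableOn) hA.compl hbound
    have h2 : (∫ V in Aᶜ, r ^ (-(1 : ℝ) / 2) * Real.exp (-8 * t * V ^ 2))
        ≤ ∫ V, r ^ (-(1 : ℝ) / 2) * Real.exp (-8 * t * V ^ 2) := by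
      apply setIntegral_le_integral hh_int
      filter_upwards with V
      positivity
    have h3 : (∫ V : ℝ, r ^ (-(1 : ℝ) / 2) * Real.exp (-8 * t * V ^ 2))
        = r ^ (-(1 : ℝ) / 2) * Real.sqrt (Real.pi / (8 * t)) := by
      rw [integral_const_mul]
      congr 1
      have : (fun V : ℝ => Real.exp (-8 * t * V ^ 2)) = fun V : ℝ => Real.exp (-(8 * t) * V ^ 2) := by
        funext V; ring_nf
      rw [this, integral_gaussian]
    have h4 : r ^ (-(1 : ℝ) / 2) * Real.sqrt (Real.pi / (8 * t))
        = Real.sqrt (Real.pi / 8) * t ^ (-(1 : ℝ) / 4) := by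
      have e1 : r ^ (-(1 : ℝ) / 2) = t ^ ((1:ℝ)/4) := by
        rw [hrdef, ← Real.rpow_mul ht.le]
        norm_num
      have einv : Real.sqrt t⁻¹ = t ^ (-(1:ℝ)/2) := by
        rw [show t⁻¹ = t ^ (-1 : ℝ) by rw [Real.rpow_neg_one], Real.sqrt_eq_rpow,
          ← Real.rpow_mul ht.le]
        norm_num
      have e2 : Real.sqrt (Real.pi / (8 * t)) = Real.sqrt (Real.pi / 8) * t ^ (-(1:ℝ)/2) := by
        rw [show Real.pi / (8 * t) = (Real.pi / 8) * t⁻¹ by field_simp,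
          Real.sqrt_mul (by positivity), einv]
      rw [e1, e2, ← mul_assoc, mul_comm (t ^ ((1:ℝ)/4)), mul_assoc,
        ← Real.rpow_add ht]
      norm_num
    calc (∫ V in Aᶜ, f V) ≤ _ := h1
      _ ≤ _ := h2
      _ = _ := by rw [h3, h4]
  calc (∫ V, f V) = (∫ V in A, f V) + ∫ V in Aᶜ, f V := hsplit
    _ ≤ 4 * t ^ (-(1 : ℝ) / 4) + Real.sqrt (Real.pi / 8) * t ^ (-(1 : ℝ) / 4) :=
        add_le_add hA_bound hAc_bound
    _ = (4 + Real.sqrt (Real.pi / 8)) * t ^ (-(1 : ℝ) / 4) := by ring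
end

section
/- Let 1 < q < 2 < p < ∞ with 1/p + 1/q = 1. Then for every t > 0 and v ∈ ℝ, ∫_ℝ e^{−8tV²} |V|^{1/p − 1/2} |V − v|^{1/q − 1} dV ≤ C(p) t^{−1/4}, where C(p) is a constant depending only on p (not on v or t). -/
open MeasureTheory

/-- For conjugate exponents `1 < q < 2 < p < ∞`, there is a constant `C(p)` such that
for all `t > 0` and `v ∈ ℝ`,
`∫_ℝ e^{−8tV²} |V|^{1/p−1/2} |V−v|^{1/q−1} dV ≤ C(p) t^{−1/4}`. -/
theorem gaussian_holder_weight_estimate (p q : ℝ) (hq : 1 < q) (hq2 : q < 2) (hp : 2 < p)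
    (hpq : 1 / p + 1 / q = 1) :
    ∃ C : ℝ, 0 < C ∧ ∀ t : ℝ, 0 < t → ∀ v : ℝ,
      (∫ V : ℝ, Real.exp (-8 * t * V ^ 2) * |V| ^ (1 / p - 1 / 2) * |V - v| ^ (1 / q - 1)) ≤
        C * t ^ (-(1 : ℝ) / 4) := by
  refine ⟨8 + 2 * Real.sqrt (Real.pi / 8), by positivity, ?_⟩
  intro t ht v
  set a : ℝ := 1 / p - 1 / 2 with ha_def
  set b : ℝ := 1 / q - 1 with hb_def
  set c : ℝ := -(1 / 2 : ℝ) with hc_def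
  have hp0 : (0:ℝ) < p := by linarith
  have hq0 : (0:ℝ) < q := by linarith
  have ha0 : a < 0 := by
    have h1 : 1 / p < 1 / 2 := by
      rw [div_lt_div_iff₀ hp0 (by norm_num)]
      linarith
    rw [ha_def]; linarith
  have hb0 : b < 0 := by
    have h1 : 1 / q < 1 := by rw [div_lt_one hq0]; linarith
    rw [hb_def]; linarith
  have hab : a + b = c := by
    rw [ha_def, hb_def, hc_def]; linarith
  set r : ℝ := t ^ (-(1:ℝ)/2) with hr_def
  have hr : 0 < r := Real.rpow_pos_of_pos ht _
  set s : ℝ := t ^ ((1:ℝ)/4) with hs_def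
  have hs : 0 < s := Real.rpow_pos_of_pos ht _
  set T : ℝ := t ^ (-(1:ℝ)/4) with hT_def
  have hT : 0 < T := Real.rpow_pos_of_pos ht _
  set g₀ : ℝ → ℝ := (Set.Ioc (-r) r).indicator (fun x => |x| ^ c) with hg0_def
  have hg0_nonneg : ∀ x, 0 ≤ g₀ x := fun x =>
    Set.indicator_nonneg (fun y _ => Real.rpow_nonneg (abs_nonneg y) _) x
  -- interval integrability of |x| ^ c on (-r, r)
  have h1 : IntervalIntegrable (fun x : ℝ => |x| ^ c) volume 0 r := by
    have hri : IntervalIntegrable (fun x : ℝ => x ^ c) volume 0 r := by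
      open intervalIntegral in
      exact intervalIntegrable_rpow' (by rw [hc_def]; norm_num)
    refine hri.congr_ae ?_
    filter_upwards [ae_restrict_mem measurableSet_uIoc] with x hx
    rw [Set.uIoc_of_le hr.le] at hx
    rw [abs_of_pos hx.1]
  have h2 : IntervalIntegrable (fun x : ℝ => |x| ^ c) volume (-r) 0 := by
    have h2' := (IntervalIntegrable.iff_comp_neg).mp h1
    simp only [abs_neg, neg_zero] at h2'
    exact h2'.symm
  have hII : IntervalIntegrable (fun x : ℝ => |x| ^ c) volume (-r) r := h2.trans h1
  have hg0int : Integrable g₀ := by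
    rw [hg0_def, integrable_indicator_iff measurableSet_Ioc]
    exact hII.1
  have hgvint : Integrable (fun V : ℝ => g₀ (V - v)) := hg0int.comp_sub_right v
  have hgauss : Integrable (fun V : ℝ => Real.exp (-8 * t * V ^ 2)) := by
    have h := integrable_exp_neg_mul_sq (show (0:ℝ) < 8 * t by linarith)
    simpa only [neg_mul] using h
  -- the majorant
  set G : ℝ → ℝ := fun V => g₀ V + g₀ (V - v) + 2 * s * Real.exp (-8 * t * V ^ 2) with hG_def
  have hGint : Integrable G := (hg0int.add hgvint).add ((hgauss.const_mul (2 * s)))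
  -- pointwise bound, step 1 : |x|^a * |y|^b ≤ |x|^c + |y|^c
  have key : ∀ x y : ℝ, |x| ^ a * |y| ^ b ≤ |x| ^ c + |y| ^ c := by
    intro x y
    rcases eq_or_lt_of_le (abs_nonneg x) with hx | hx
    · rw [← hx, Real.zero_rpow ha0.ne, zero_mul]
      positivity
    rcases eq_or_lt_of_le (abs_nonneg y) with hy | hy
    · rw [← hy, Real.zero_rpow hb0.ne, mul_zero]
      positivity
    rcases le_total |x| |y| with h | h
    · have h3 : |y| ^ b ≤ |x| ^ b := Real.rpow_le_rpow_of_nonpos hx h hb0.le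
      have h4 : |x| ^ a * |y| ^ b ≤ |x| ^ a * |x| ^ b :=
        mul_le_mul_of_nonneg_left h3 (Real.rpow_nonneg (abs_nonneg x) _)
      have h5 : |x| ^ a * |x| ^ b = |x| ^ c := by rw [← Real.rpow_add hx, hab]
      have h6 : 0 ≤ |y| ^ c := Real.rpow_nonneg (abs_nonneg y) _
      linarith
    · have h3 : |x| ^ a ≤ |y| ^ a := Real.rpow_le_rpow_of_nonpos hy h ha0.le
      have h4 : |x| ^ a * |y| ^ b ≤ |y| ^ a * |y| ^ b :=
        mul_le_mul_of_nonneg_right h3 (Real.rpow_nonneg (abs_nonneg y) _)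
      have h5 : |y| ^ a * |y| ^ b = |y| ^ c := by rw [← Real.rpow_add hy, hab]
      have h6 : 0 ≤ |x| ^ c := Real.rpow_nonneg (abs_nonneg x) _
      linarith
  -- pointwise bound, step 2 : E * |u|^c ≤ indicator + s * E
  have hrc : r ^ c = s := by
    rw [hr_def, hc_def, ← Real.rpow_mul ht.le, hs_def]
    norm_num
  have claim : ∀ u V : ℝ,
      Real.exp (-8 * t * V ^ 2) * |u| ^ c ≤
        (Set.Ioc (-r) r).indicator (fun x => |x| ^ c) u + s * Real.exp (-8 * t * V ^ 2) := by
    intro u V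
    have hE1 : Real.exp (-8 * t * V ^ 2) ≤ 1 := by
      rw [Real.exp_le_one_iff]
      nlinarith [sq_nonneg V]
    have hE0 : (0:ℝ) < Real.exp (-8 * t * V ^ 2) := Real.exp_pos _
    rcases lt_or_ge (|u|) r with h | h
    · have hu : u ∈ Set.Ioc (-r) r := by
        constructor
        · have := neg_abs_le u; linarith
        · have := le_abs_self u; linarith
      rw [Set.indicator_of_mem hu]
      have hle : Real.exp (-8 * t * V ^ 2) * |u| ^ c ≤ |u| ^ c :=
        mul_le_of_le_one_left (Real.rpow_nonneg (abs_nonneg u) _) hE1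
      nlinarith [mul_nonneg hs.le hE0.le]
    · have huc : |u| ^ c ≤ s := by
        rw [← hrc]
        exact Real.rpow_le_rpow_of_nonpos hr h (by rw [hc_def]; norm_num)
      have hind : 0 ≤ (Set.Ioc (-r) r).indicator (fun x => |x| ^ c) u :=
        Set.indicator_nonneg (fun y _ => Real.rpow_nonneg (abs_nonneg y) _) u
      nlinarith
  -- full pointwise bound
  have hfG : ∀ V : ℝ,
      Real.exp (-8 * t * V ^ 2) * |V| ^ a * |V - v| ^ b ≤ G V := by
    intro V
    have hE0 : (0:ℝ) ≤ Real.exp (-8 * t * V ^ 2) := (Real.exp_pos _).le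
    have step1 : Real.exp (-8 * t * V ^ 2) * |V| ^ a * |V - v| ^ b ≤
        Real.exp (-8 * t * V ^ 2) * |V| ^ c + Real.exp (-8 * t * V ^ 2) * |V - v| ^ c := by
      have := mul_le_mul_of_nonneg_left (key V (V - v)) hE0
      calc Real.exp (-8 * t * V ^ 2) * |V| ^ a * |V - v| ^ b
          = Real.exp (-8 * t * V ^ 2) * (|V| ^ a * |V - v| ^ b) := by ring
        _ ≤ Real.exp (-8 * t * V ^ 2) * (|V| ^ c + |V - v| ^ c) := this
        _ = _ := by ring
    have step2 := claim V V
    have step3 := claim (V - v) V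
    simp only [hG_def, hg0_def]
    linarith
  -- apply monotonicity
  have hmono : (∫ V : ℝ, Real.exp (-8 * t * V ^ 2) * |V| ^ a * |V - v| ^ b) ≤ ∫ V, G V := by
    refine integral_mono_of_nonneg ?_ hGint ?_
    · filter_upwards with V
      have : (0:ℝ) ≤ Real.exp (-8 * t * V ^ 2) := (Real.exp_pos _).le
      positivity
    · filter_upwards with V
      exact hfG V
  -- compute integral of g₀
  have hint_g0 : (∫ V, g₀ V) = 4 * T := by
    rw [hg0_def, integral_indicator measurableSet_Ioc,
      ← intervalIntegral.integral_of_le (by linarith : -r ≤ r)]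
    have hsplit : (∫ x in (-r)..r, |x| ^ c) =
        (∫ x in (-r)..(0:ℝ), |x| ^ c) + ∫ x in (0:ℝ)..r, |x| ^ c :=
      (intervalIntegral.integral_add_adjacent_intervals h2 h1).symm
    have hneg : (∫ x in (-r)..(0:ℝ), |x| ^ c) = ∫ x in (0:ℝ)..r, |x| ^ c := by
      have := intervalIntegral.integral_comp_neg (a := -r) (b := 0) (fun x : ℝ => |x| ^ c)
      simp only [abs_neg, neg_zero, neg_neg] at this
      exact this
    have hpos : (∫ x in (0:ℝ)..r, |x| ^ c) = 2 * T := by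
      have hcongr : (∫ x in (0:ℝ)..r, |x| ^ c) = ∫ x in (0:ℝ)..r, x ^ c := by
        refine intervalIntegral.integral_congr fun x hx => ?_
        rw [Set.uIcc_of_le hr.le] at hx
        rw [abs_of_nonneg hx.1]
      rw [hcongr]
      open intervalIntegral in
      rw [integral_rpow (Or.inl (show (-1:ℝ) < c by rw [hc_def]; norm_num))]
      have hc1 : c + 1 = 1/2 := by rw [hc_def]; norm_num
      rw [hc1, Real.zero_rpow (by norm_num : (1:ℝ)/2 ≠ 0)]
      have hrT : r ^ ((1:ℝ)/2) = T := by
        rw [hr_def, ← Real.rpow_mul ht.le, hT_def]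
        norm_num
      rw [hrT]
      ring
    rw [hsplit, hneg, hpos]; ring
  -- compute integral of shifted g₀
  have hint_gv : (∫ V, g₀ (V - v)) = 4 * T := by
    rw [integral_sub_right_eq_self g₀ v, hint_g0]
  -- Gaussian integral
  have hint_gauss : (∫ V : ℝ, Real.exp (-8 * t * V ^ 2)) = Real.sqrt (Real.pi / (8 * t)) := by
    have := integral_gaussian (8 * t)
    rw [← this]
    congr 1 with V
    ring_nf
  -- value of the majorant integral
  have hGval : (∫ V, G V) = 8 * T + 2 * s * Real.sqrt (Real.pi / (8 * t)) := by
    have hfun : G = fun V => g₀ V + (g₀ (V - v) + 2 * s * Real.exp (-8 * t * V ^ 2)) := by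
      rw [hG_def]; funext V; ring
    have hg2 : Integrable (fun V : ℝ => g₀ (V - v) + 2 * s * Real.exp (-8 * t * V ^ 2)) :=
      hgvint.add (hgauss.const_mul (2 * s))
    have e1 : (∫ V, G V) =
        (∫ V, g₀ V) + ∫ V : ℝ, (g₀ (V - v) + 2 * s * Real.exp (-8 * t * V ^ 2)) := by
      rw [hfun]; exact integral_add hg0int hg2
    have e2 : (∫ V : ℝ, (g₀ (V - v) + 2 * s * Real.exp (-8 * t * V ^ 2))) =
        (∫ V : ℝ, g₀ (V - v)) + (2 * s) * ∫ V : ℝ, Real.exp (-8 * t * V ^ 2) := by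
      rw [integral_add hgvint (hgauss.const_mul (2 * s)), integral_const_mul]
    rw [e1, e2, hint_g0, hint_gv, hint_gauss]
    ring
  -- relate sqrt term to T
  have hsqrt : s * Real.sqrt (Real.pi / (8 * t)) = Real.sqrt (Real.pi / 8) * T := by
    have h8 : Real.pi / (8 * t) = (Real.pi / 8) * t⁻¹ := by ring
    rw [h8, Real.sqrt_mul (by positivity : (0:ℝ) ≤ Real.pi / 8)]
    have hinv : Real.sqrt t⁻¹ = t ^ (-(1:ℝ)/2) := by
      rw [Real.sqrt_eq_rpow, ← Real.rpow_neg_one t, ← Real.rpow_mul ht.le]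
      norm_num
    have hts : s * t ^ (-(1:ℝ)/2) = T := by
      rw [hs_def, hT_def, ← Real.rpow_add ht]; norm_num
    rw [hinv]
    calc s * (Real.sqrt (Real.pi / 8) * t ^ (-(1:ℝ)/2))
        = Real.sqrt (Real.pi / 8) * (s * t ^ (-(1:ℝ)/2)) := by ring
      _ = Real.sqrt (Real.pi / 8) * T := by rw [hts]
  calc (∫ V : ℝ, Real.exp (-8 * t * V ^ 2) * |V| ^ a * |V - v| ^ b)
      ≤ ∫ V, G V := hmono
    _ = 8 * T + 2 * s * Real.sqrt (Real.pi / (8 * t)) := hGval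
    _ = 8 * T + 2 * (Real.sqrt (Real.pi / 8) * T) := by rw [mul_assoc, hsqrt]
    _ = (8 + 2 * Real.sqrt (Real.pi / 8)) * T := by ring
end

section
/- Let t > 0 and z₀ ∈ ℝ. Then ∬_{Ω₃∪Ω₆} e^{8t(U−z₀)V} ((U−z₀)² + V²)^{−1/4} dA(U,V) ≤ C t^{−3/4} for an absolute constant C, where Ω₃ = {3π/4 < arg(z−z₀) < π} and Ω₆ = {−π/4 < arg(z−z₀) < 0}. -/
open MeasureTheory Real Set

private lemma integrable_comp_abs_of_integrableOn {f : ℝ → ℝ}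
    (hf : IntegrableOn f (Ioi 0)) : Integrable (fun x => f |x|) := by
  have h0 : IntegrableOn (fun x => f |x|) (Ioi 0) :=
    hf.congr_fun (fun x hx => by rw [abs_of_pos hx]) measurableSet_Ioi
  have int_Iic : IntegrableOn (fun x ↦ f |x|) (Iic 0) := by
    rw [← Measure.map_neg_eq_self (volume : Measure ℝ)]
    have m : MeasurableEmbedding fun x : ℝ => -x := (Homeomorph.neg ℝ).measurableEmbedding
    rw [m.integrableOn_map_iff]
    simp_rw [Function.comp_def, abs_neg, neg_preimage, neg_Iic, neg_zero]
    exact Iff.mpr integrableOn_Ici_iff_integrableOn_Ioi h0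
  rw [← integrableOn_univ, ← Iic_union_Ioi (a := (0:ℝ))]
  exact int_Iic.union h0

private lemma lintegral_ofReal_comp_abs {f : ℝ → ℝ} (hf : IntegrableOn f (Ioi 0))
    (hnn : ∀ x : ℝ, 0 < x → 0 ≤ f x) :
    ∫⁻ x : ℝ, ENNReal.ofReal (f |x|) = ENNReal.ofReal (2 * ∫ x in Ioi (0:ℝ), f x) := by
  have hae : 0 ≤ᵐ[(volume : Measure ℝ)] fun x => f |x| := by
    have h0 : ({(0:ℝ)}ᶜ : Set ℝ) ∈ ae (volume : Measure ℝ) := by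
      rw [mem_ae_iff, compl_compl]; exact measure_singleton 0
    filter_upwards [h0] with x hx
    exact hnn _ (abs_pos.mpr hx)
  rw [← integral_comp_abs (f := f)]
  exact (ofReal_integral_eq_lintegral_ofReal (integrable_comp_abs_of_integrableOn hf) hae).symm

private lemma I1 {c : ℝ} (hc : 0 < c) :
    ∫ x in Ioi (0:ℝ), x ^ (-(1:ℝ)/2) * Real.exp (-(c * x)) =
      c ^ (-(1:ℝ)/2) * Real.Gamma (1/2) := by
  have h := integral_rpow_mul_exp_neg_mul_rpow (p := 1) (q := -(1:ℝ)/2) (b := c)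
    one_pos (by norm_num) hc
  simp_rw [Real.rpow_one, neg_mul] at h
  rw [h]
  norm_num

private lemma I1int {c : ℝ} (hc : 0 < c) :
    IntegrableOn (fun x : ℝ => x ^ (-(1:ℝ)/2) * Real.exp (-(c * x))) (Ioi 0) := by
  have h := integrableOn_rpow_mul_exp_neg_mul_rpow (p := 1) (s := -(1:ℝ)/2) (b := c)
    (by norm_num) one_pos hc
  simpa [Real.rpow_one, neg_mul] using h

private lemma I2 {b : ℝ} (hb : 0 < b) :
    ∫ x in Ioi (0:ℝ), x ^ (-(1:ℝ)/2) * Real.exp (-(b * x ^ 2)) =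
      b ^ (-(1:ℝ)/4) * (1/2) * Real.Gamma (1/4) := by
  have h := integral_rpow_mul_exp_neg_mul_rpow (p := 2) (q := -(1:ℝ)/2) (b := b)
    two_pos (by norm_num) hb
  rw [show ∫ x in Ioi (0:ℝ), x ^ (-(1:ℝ)/2) * Real.exp (-(b * x ^ 2)) =
      ∫ x in Ioi (0:ℝ), x ^ (-(1:ℝ)/2) * Real.exp (-b * x ^ (2:ℝ)) from
    setIntegral_congr_fun measurableSet_Ioi (fun x hx => by
      rw [← Real.rpow_natCast x 2, neg_mul]; norm_num), h]
  norm_num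

private lemma I2int {b : ℝ} (hb : 0 < b) :
    IntegrableOn (fun x : ℝ => x ^ (-(1:ℝ)/2) * Real.exp (-(b * x ^ 2))) (Ioi 0) := by
  have h := integrableOn_rpow_mul_exp_neg_mul_rpow (p := 2) (s := -(1:ℝ)/2) (b := b)
    (by norm_num) two_pos hb
  apply h.congr_fun (fun x hx => ?_) measurableSet_Ioi
  rw [← Real.rpow_natCast x 2, neg_mul]; norm_num

private noncomputable def Gfun (t : ℝ) : ℝ → ℝ := fun x =>
  2 * ((4 * t * x) ^ (-(1:ℝ)/2) * Real.Gamma (1/2)) * Real.exp (-(4 * t * x ^ 2))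

private lemma core (t : ℝ) (ht : 0 < t) :
    (∫ P in {P : ℝ × ℝ | (0 < P.2 ∧ P.1 < -P.2) ∨ (P.2 < 0 ∧ -P.2 < P.1)},
        Real.exp (8 * t * P.1 * P.2) * (P.1 ^ 2 + P.2 ^ 2) ^ (-(1 : ℝ) / 4)
        ∂(volume : Measure (ℝ × ℝ))) ≤
      (2 * Real.Gamma (1/2) * Real.Gamma (1/4)) * t ^ (-(3 : ℝ) / 4) := by
  have hTmeas : MeasurableSet {P : ℝ × ℝ | (0 < P.2 ∧ P.1 < -P.2) ∨ (P.2 < 0 ∧ -P.2 < P.1)} := by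
    rw [setOf_or]
    exact ((measurableSet_lt measurable_const measurable_snd).inter
        (measurableSet_lt measurable_fst measurable_snd.neg)).union
      ((measurableSet_lt measurable_snd measurable_const).inter
        (measurableSet_lt measurable_snd.neg measurable_fst))
  have hfmeas : Measurable fun P : ℝ × ℝ =>
      Real.exp (8 * t * P.1 * P.2) * (P.1 ^ 2 + P.2 ^ 2) ^ (-(1 : ℝ) / 4) := by fun_prop
  set g : ℝ × ℝ → ENNReal := fun P =>
    ENNReal.ofReal (|P.1| ^ (-(1:ℝ)/2) * Real.exp (-(4 * t * |P.2| * |P.1|))) *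
      ENNReal.ofReal (Real.exp (-(4 * t * P.2 ^ 2))) with hg
  have hgmeas : Measurable g := by rw [hg]; fun_prop
  rw [integral_eq_lintegral_of_nonneg_ae (ae_of_all _ fun P => by positivity)
    hfmeas.aestronglyMeasurable.restrict]
  apply ENNReal.toReal_le_of_le_ofReal (by positivity)
  have step1 : (∫⁻ P in {P : ℝ × ℝ | (0 < P.2 ∧ P.1 < -P.2) ∨ (P.2 < 0 ∧ -P.2 < P.1)},
      ENNReal.ofReal (Real.exp (8 * t * P.1 * P.2) * (P.1 ^ 2 + P.2 ^ 2) ^ (-(1 : ℝ) / 4))) ≤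
      ∫⁻ P, g P := by
    rw [← lintegral_indicator hTmeas]
    apply lintegral_mono
    intro P
    by_cases hP : P ∈ {P : ℝ × ℝ | (0 < P.2 ∧ P.1 < -P.2) ∨ (P.2 < 0 ∧ -P.2 < P.1)}
    · rw [indicator_of_mem hP]
      have h1 : |P.2| ≤ |P.1| ∧ P.1 * P.2 = -(|P.1| * |P.2|) ∧ P.1 ≠ 0 := by
        rcases hP with ⟨hv, hu⟩ | ⟨hv, hu⟩
        · have hu0 : P.1 < 0 := lt_trans hu (by linarith)
          rw [abs_of_pos hv, abs_of_neg hu0]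
          exact ⟨by linarith, by ring, ne_of_lt hu0⟩
        · have hu0 : 0 < P.1 := lt_trans (by linarith) hu
          rw [abs_of_neg hv, abs_of_pos hu0]
          exact ⟨by linarith, by ring, ne_of_gt hu0⟩
      obtain ⟨habs, hprod, hne⟩ := h1
      have hexp : Real.exp (8 * t * P.1 * P.2) ≤
          Real.exp (-(4 * t * |P.2| * |P.1|)) * Real.exp (-(4 * t * P.2 ^ 2)) := by
        rw [← Real.exp_add, Real.exp_le_exp]
        have h2 : 8 * t * P.1 * P.2 = -(8 * t * (|P.1| * |P.2|)) := by
          rw [mul_assoc, hprod, mul_neg]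
        have h3 : t * (|P.2| * |P.2|) ≤ t * (|P.2| * |P.1|) :=
          mul_le_mul_of_nonneg_left (mul_le_mul_of_nonneg_left habs (abs_nonneg _)) ht.le
        have h4 : P.2 ^ 2 = |P.2| * |P.2| := by
          rw [pow_two]; exact (abs_mul_abs_self P.2).symm
        rw [h2, h4]
        nlinarith [h3]
      have hpow : (P.1 ^ 2 + P.2 ^ 2) ^ (-(1 : ℝ) / 4) ≤ |P.1| ^ (-(1:ℝ)/2) := by
        have h5 : (0:ℝ) < P.1 ^ 2 := by positivity
        calc (P.1 ^ 2 + P.2 ^ 2) ^ (-(1 : ℝ) / 4) ≤ (P.1 ^ 2) ^ (-(1 : ℝ) / 4) :=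
              Real.rpow_le_rpow_of_nonpos h5 (by nlinarith [sq_nonneg P.2]) (by norm_num)
          _ = |P.1| ^ (-(1:ℝ)/2) := by
              rw [← sq_abs, ← Real.rpow_natCast |P.1| 2, ← Real.rpow_mul (abs_nonneg _)]
              norm_num
      calc ENNReal.ofReal (Real.exp (8 * t * P.1 * P.2) *
              (P.1 ^ 2 + P.2 ^ 2) ^ (-(1 : ℝ) / 4))
          ≤ ENNReal.ofReal ((|P.1| ^ (-(1:ℝ)/2) * Real.exp (-(4 * t * |P.2| * |P.1|))) *
              Real.exp (-(4 * t * P.2 ^ 2))) := by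
            apply ENNReal.ofReal_le_ofReal
            calc Real.exp (8 * t * P.1 * P.2) * (P.1 ^ 2 + P.2 ^ 2) ^ (-(1 : ℝ) / 4)
                ≤ (Real.exp (-(4 * t * |P.2| * |P.1|)) * Real.exp (-(4 * t * P.2 ^ 2))) *
                    (|P.1| ^ (-(1:ℝ)/2)) :=
                  mul_le_mul hexp hpow (Real.rpow_nonneg (by positivity) _) (by positivity)
              _ = _ := by ring
        _ = g P := by
            simp only [hg]
            exact ENNReal.ofReal_mul
              (p := |P.1| ^ (-(1:ℝ)/2) * Real.exp (-(4 * t * |P.2| * |P.1|)))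
              (by positivity)
    · rw [indicator_of_notMem hP]
      exact zero_le'
  refine le_trans step1 ?_
  rw [Measure.volume_eq_prod, lintegral_prod_symm g hgmeas.aemeasurable]
  have hinner : ∀ v : ℝ, v ≠ 0 → (∫⁻ u : ℝ, g (u, v)) =
      ENNReal.ofReal ((2 * ((4 * t * |v|) ^ (-(1:ℝ)/2) * Real.Gamma (1/2))) *
        Real.exp (-(4 * t * v ^ 2))) := by
    intro v hv
    have hc : 0 < 4 * t * |v| := by
      have : 0 < |v| := abs_pos.mpr hv
      positivity
    have hmeasF : Measurable fun u : ℝ =>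
        ENNReal.ofReal (|u| ^ (-(1:ℝ)/2) * Real.exp (-(4 * t * |v| * |u|))) := by fun_prop
    calc (∫⁻ u : ℝ, g (u, v))
        = (∫⁻ u : ℝ, ENNReal.ofReal (|u| ^ (-(1:ℝ)/2) * Real.exp (-(4 * t * |v| * |u|)))) *
            ENNReal.ofReal (Real.exp (-(4 * t * v ^ 2))) := by
          rw [← lintegral_mul_const _ hmeasF]
      _ = ENNReal.ofReal (2 * ∫ x in Ioi (0:ℝ),
              x ^ (-(1:ℝ)/2) * Real.exp (-(4 * t * |v| * x))) *
            ENNReal.ofReal (Real.exp (-(4 * t * v ^ 2))) := by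
          congr 1
          exact lintegral_ofReal_comp_abs (I1int hc) (fun x hx => by positivity)
      _ = ENNReal.ofReal ((2 * ((4 * t * |v|) ^ (-(1:ℝ)/2) * Real.Gamma (1/2))) *
            Real.exp (-(4 * t * v ^ 2))) := by
          rw [I1 hc, ← ENNReal.ofReal_mul (by positivity)]
  have houter : (∫⁻ v : ℝ, ∫⁻ u : ℝ, g (u, v)) =
      ∫⁻ v : ℝ, ENNReal.ofReal (Gfun t |v|) := by
    apply lintegral_congr_ae
    have h0 : ({(0:ℝ)}ᶜ : Set ℝ) ∈ ae (volume : Measure ℝ) := by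
      rw [mem_ae_iff, compl_compl]; exact measure_singleton 0
    filter_upwards [h0] with v hv
    rw [hinner v hv]
    simp only [Gfun, sq_abs]
  rw [houter]
  have hGint : IntegrableOn (Gfun t) (Ioi 0) := by
    have base : IntegrableOn (fun x : ℝ =>
        (2 * Real.Gamma (1/2) * (4 * t) ^ (-(1:ℝ)/2)) *
          (x ^ (-(1:ℝ)/2) * Real.exp (-(4 * t * x ^ 2)))) (Ioi 0) :=
      (I2int (by positivity)).const_mul _
    apply base.congr_fun (fun x hx => ?_) measurableSet_Ioi
    simp only [Gfun]
    rw [Real.mul_rpow (by positivity) hx.le]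
    ring
  have hGnn : ∀ x : ℝ, 0 < x → 0 ≤ Gfun t x := by
    intro x hx
    simp only [Gfun]
    have h1 : (0:ℝ) ≤ (4 * t * x) ^ (-(1:ℝ)/2) := Real.rpow_nonneg (by positivity) _
    positivity
  rw [lintegral_ofReal_comp_abs hGint hGnn]
  apply ENNReal.ofReal_le_ofReal
  have hval : ∫ x in Ioi (0:ℝ), Gfun t x =
      (2 * Real.Gamma (1/2) * (4 * t) ^ (-(1:ℝ)/2)) *
        ((4 * t) ^ (-(1:ℝ)/4) * (1/2) * Real.Gamma (1/4)) := by
    rw [setIntegral_congr_fun measurableSet_Ioi (fun x hx => show Gfun t x =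
        (2 * Real.Gamma (1/2) * (4 * t) ^ (-(1:ℝ)/2)) *
          (x ^ (-(1:ℝ)/2) * Real.exp (-(4 * t * x ^ 2))) from by
        simp only [Gfun]
        rw [Real.mul_rpow (by positivity) hx.le]
        ring)]
    rw [integral_const_mul, I2 (by positivity)]
  rw [hval]
  have e1 : (4 * t) ^ (-(1:ℝ)/2) * (4 * t) ^ (-(1:ℝ)/4) = (4 * t) ^ (-(3:ℝ)/4) := by
    rw [← Real.rpow_add (by positivity)]; norm_num
  have e2 : (4 * t) ^ (-(3:ℝ)/4) ≤ t ^ (-(3:ℝ)/4) := by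
    rw [Real.mul_rpow (by norm_num) ht.le]
    have h1 : (4:ℝ) ^ (-(3:ℝ)/4) ≤ 1 :=
      Real.rpow_le_one_of_one_le_of_nonpos (by norm_num) (by norm_num)
    have h2 : (0:ℝ) ≤ t ^ (-(3:ℝ)/4) := Real.rpow_nonneg ht.le _
    nlinarith
  calc 2 * ((2 * Real.Gamma (1/2) * (4 * t) ^ (-(1:ℝ)/2)) *
        ((4 * t) ^ (-(1:ℝ)/4) * (1/2) * Real.Gamma (1/4)))
      = (2 * Real.Gamma (1/2) * Real.Gamma (1/4)) *
          ((4 * t) ^ (-(1:ℝ)/2) * (4 * t) ^ (-(1:ℝ)/4)) := by ring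
    _ = (2 * Real.Gamma (1/2) * Real.Gamma (1/4)) * (4 * t) ^ (-(3:ℝ)/4) := by rw [e1]
    _ ≤ (2 * Real.Gamma (1/2) * Real.Gamma (1/4)) * t ^ (-(3:ℝ)/4) := by
        apply mul_le_mul_of_nonneg_left e2 (by positivity)
    _ = (2 * Real.Gamma (1/2) * Real.Gamma (1/4)) * t ^ (-(3:ℝ) / 4) := by norm_num

/-- There is an absolute constant `C` such that for all `t > 0` and `z₀ ∈ ℝ`,
`∬_{Ω₃∪Ω₆} e^{8t(U−z₀)V} ((U−z₀)² + V²)^{−1/4} dA(U,V) ≤ C t^{−3/4}`, where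
`Ω₃ = {3π/4 < arg(z−z₀) < π}` and `Ω₆ = {−π/4 < arg(z−z₀) < 0}`, i.e.
`{V > 0, U − z₀ < −V} ∪ {V < 0, −V < U − z₀}`. -/
theorem J36_tilde_estimate :
    ∃ C : ℝ, 0 < C ∧ ∀ (t z₀ : ℝ), 0 < t →
      (∫ P in {P : ℝ × ℝ | (0 < P.2 ∧ P.1 - z₀ < -P.2) ∨ (P.2 < 0 ∧ -P.2 < P.1 - z₀)},
          Real.exp (8 * t * (P.1 - z₀) * P.2) *
            ((P.1 - z₀) ^ 2 + P.2 ^ 2) ^ (-(1 : ℝ) / 4)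
          ∂(volume : Measure (ℝ × ℝ))) ≤
        C * t ^ (-(3 : ℝ) / 4) := by
  refine ⟨2 * Real.Gamma (1/2) * Real.Gamma (1/4), by positivity, ?_⟩
  intro t z₀ ht
  have hmp : MeasurePreserving (fun P : ℝ × ℝ => (P.1 + z₀, P.2)) volume volume := by
    rw [Measure.volume_eq_prod]
    exact (measurePreserving_add_right volume z₀).prod (MeasurePreserving.id volume)
  have hemb : MeasurableEmbedding (fun P : ℝ × ℝ => (P.1 + z₀, P.2)) :=
    ((Homeomorph.addRight z₀).prodCongr (Homeomorph.refl ℝ)).measurableEmbedding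
  have key := hmp.setIntegral_preimage_emb hemb
    (fun P : ℝ × ℝ => Real.exp (8 * t * (P.1 - z₀) * P.2) *
      ((P.1 - z₀) ^ 2 + P.2 ^ 2) ^ (-(1 : ℝ) / 4))
    {P : ℝ × ℝ | (0 < P.2 ∧ P.1 - z₀ < -P.2) ∨ (P.2 < 0 ∧ -P.2 < P.1 - z₀)}
  rw [← key]
  have hset : (fun P : ℝ × ℝ => (P.1 + z₀, P.2)) ⁻¹'
      {P : ℝ × ℝ | (0 < P.2 ∧ P.1 - z₀ < -P.2) ∨ (P.2 < 0 ∧ -P.2 < P.1 - z₀)} =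
      {P : ℝ × ℝ | (0 < P.2 ∧ P.1 < -P.2) ∨ (P.2 < 0 ∧ -P.2 < P.1)} := by
    ext P
    simp only [mem_preimage, mem_setOf_eq, add_sub_cancel_right]
  rw [hset]
  simp only [add_sub_cancel_right]
  exact core t ht
end

section
/- Let z₀ ∈ ℝ and let S ⊂ ℝ² be the union of the four sectors where |arg(z − z₀)| ∈ (0, π/4) ∪ (3π/4, π) (i.e., the region between the real axis and the two diagonals through z₀). Then for all v with |v| > |z₀| and all (U,V) ∈ S, √((U² + V²)/(U² + (V − v)²)) ≤ 1 + √2 · |v|/(|v| − |z₀|). -/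
/-- Geometric kernel estimate: on the union `S` of the four sectors where
`|arg(z − z₀)| ∈ (0, π/4) ∪ (3π/4, π)`, i.e. `0 < |V| < |U − z₀|`, one has for `|v| > |z₀|`:
`√((U² + V²)/(U² + (V − v)²)) ≤ 1 + √2 |v|/(|v| − |z₀|)`. -/
theorem kernel_geometric_estimate (z₀ v : ℝ) (hv : |z₀| < |v|) :
    ∀ U V : ℝ, V ≠ 0 → |V| < |U - z₀| →
      Real.sqrt ((U ^ 2 + V ^ 2) / (U ^ 2 + (V - v) ^ 2)) ≤
        1 + Real.sqrt 2 * |v| / (|v| - |z₀|) := by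
  intro U V hV hVU
  set a := |v| - |z₀| with ha
  have ha0 : 0 < a := by simp only [ha]; linarith
  have hz1 : -|z₀| ≤ z₀ := neg_abs_le z₀
  have hz2 : z₀ ≤ |z₀| := le_abs_self z₀
  have hv1 : -|v| ≤ v := neg_abs_le v
  have hv2 : v ≤ |v| := le_abs_self v
  obtain ⟨hV1, hV2⟩ := abs_lt.mp hVU
  -- key lower bound on the denominator
  have hB : a ^ 2 / 2 ≤ U ^ 2 + (V - v) ^ 2 := by
    rcases le_or_gt U z₀ with hU | hU
    · have habs : |U - z₀| = z₀ - U := by rw [abs_of_nonpos (by linarith)]; ring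
      rw [habs] at hV1 hV2
      rcases le_or_gt 0 v with hv0 | hv0
      · have hva : |v| = v := abs_of_nonneg hv0
        have key : a ≤ v - U - V := by rw [ha, hva]; linarith
        nlinarith [sq_nonneg (U - V + v), key, ha0.le]
      · have hva : |v| = -v := abs_of_neg hv0
        have key : a ≤ -v + V - U := by rw [ha, hva]; linarith
        nlinarith [sq_nonneg (U + V - v), key, ha0.le]
    · have habs : |U - z₀| = U - z₀ := abs_of_pos (by linarith)
      rw [habs] at hV1 hV2
      rcases le_or_gt 0 v with hv0 | hv0
      · have hva : |v| = v := abs_of_nonneg hv0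
        have key : a ≤ U - V + v := by rw [ha, hva]; linarith
        nlinarith [sq_nonneg (U + V - v), key, ha0.le]
      · have hva : |v| = -v := abs_of_neg hv0
        have key : a ≤ U + V - v := by rw [ha, hva]; linarith
        nlinarith [sq_nonneg (U - V + v), key, ha0.le]
  have hB0 : 0 < U ^ 2 + (V - v) ^ 2 :=
    lt_of_lt_of_le (by positivity) hB
  set b := Real.sqrt (U ^ 2 + (V - v) ^ 2) with hbdef
  have hb0 : 0 < b := Real.sqrt_pos.mpr hB0
  have hb2 : b ^ 2 = U ^ 2 + (V - v) ^ 2 := Real.sq_sqrt hB0.le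
  have hVv : |V - v| ≤ b := by
    rw [hbdef, ← Real.sqrt_sq_eq_abs]
    exact Real.sqrt_le_sqrt (by nlinarith [sq_nonneg U])
  have hsqA : Real.sqrt (U ^ 2 + V ^ 2) ≤ b + |v| := by
    rw [show b + |v| = Real.sqrt ((b + |v|) ^ 2) from
      (Real.sqrt_sq (by positivity)).symm]
    apply Real.sqrt_le_sqrt
    have h1 : v * (V - v) ≤ |v| * b := by
      calc v * (V - v) ≤ |v * (V - v)| := le_abs_self _
        _ = |v| * |V - v| := abs_mul _ _
        _ ≤ |v| * b := by
            exact mul_le_mul_of_nonneg_left hVv (abs_nonneg v)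
    nlinarith [hb2, h1, sq_abs v]
  -- lower bound √2 b ≥ a
  have hs2 : a ≤ Real.sqrt 2 * b := by
    have h2 : (0:ℝ) < Real.sqrt 2 := by positivity
    have h3 : Real.sqrt (a ^ 2 / 2) ≤ b := Real.sqrt_le_sqrt hB
    rw [Real.sqrt_div (sq_nonneg a), Real.sqrt_sq ha0.le] at h3
    rw [div_le_iff₀ h2] at h3
    nlinarith [h3]
  calc Real.sqrt ((U ^ 2 + V ^ 2) / (U ^ 2 + (V - v) ^ 2))
      = Real.sqrt (U ^ 2 + V ^ 2) / b := by
        rw [Real.sqrt_div (by positivity)]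
    _ ≤ (b + |v|) / b := by gcongr
    _ = 1 + |v| / b := by field_simp
    _ ≤ 1 + Real.sqrt 2 * |v| / a := by
        have : |v| / b ≤ Real.sqrt 2 * |v| / a := by
          rw [div_le_div_iff₀ hb0 ha0]
          calc |v| * a ≤ |v| * (Real.sqrt 2 * b) :=
                mul_le_mul_of_nonneg_left hs2 (abs_nonneg v)
            _ = Real.sqrt 2 * |v| * b := by ring
        linarith
end
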